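/- arXiv:1810.12998 — 4 statements merged into one kernel-verified Lean document; each statement's English description precedes it below -/
import Mathlib

section
/- Let k be a positive integer, X a topological space with S(2k-1)-cellularity at most κ (κ infinite), and let 𝒰 be a family of S(2k-1)-open subsets of X, each U ∈ 𝒰 equipped with a chain of open sets U_1,...,U_k with cl(U_i) ⊆ U_{i+1} and U_k = U; write U(k) = U_1. Then there exists a subfamily 𝒱 ⊆ 𝒰 with |𝒱| ≤ κ such that ⋃{U(k) : U ∈ 𝒰} ⊆ θ_{2k-1}(⋃𝒱). -/
open Cardinal Set

universe u

variable {X : Type u}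

/-- `x` is S(n)-separated from `A`. -/
def SSep [TopologicalSpace X] : ℕ → X → Set X → Prop
  | 0, x, A => x ∉ closure A
  | (n+1), x, A => ∃ U : ℕ → Set X, (∀ i ≤ n, IsOpen (U i)) ∧ x ∈ U 0 ∧
      (∀ i < n, closure (U i) ⊆ U (i+1)) ∧ closure (U n) ∩ A = ∅

/-- `X` is an S(n)-space. -/
def SSpace (n : ℕ) (X : Type u) [TopologicalSpace X] : Prop :=
  ∀ x y : X, x ≠ y → SSep n x {y}

/-- `U` is an S(2k-1)-neighborhood of `x` (for `k ≥ 1`). -/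
def SOddNhd [TopologicalSpace X] (k : ℕ) (x : X) (U : Set X) : Prop :=
  ∃ V : ℕ → Set X, (∀ i < k, IsOpen (V i)) ∧ x ∈ V 0 ∧
    (∀ i, i + 1 < k → closure (V i) ⊆ V (i+1)) ∧ V (k-1) ⊆ U

/-- `U` is an S(2k)-neighborhood of `x` (for `k ≥ 1`). -/
def SEvenNhd [TopologicalSpace X] (k : ℕ) (x : X) (U : Set X) : Prop :=
  ∃ V : ℕ → Set X, (∀ i < k, IsOpen (V i)) ∧ x ∈ V 0 ∧
    (∀ i, i + 1 < k → closure (V i) ⊆ V (i+1)) ∧ closure (V (k-1)) ⊆ U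

/-- `U` is an open S(2k-1)-neighborhood of `x`. -/
def SOpenNhd [TopologicalSpace X] (k : ℕ) (x : X) (U : Set X) : Prop :=
  IsOpen U ∧ SOddNhd k x U

/-- `U` is an S(2k-1)-open set. -/
def SOpen [TopologicalSpace X] (k : ℕ) (U : Set X) : Prop :=
  IsOpen U ∧ ∃ x, SOddNhd k x U

/-- The S(2k-1)-closure `θ_{2k-1}(A)`. -/
def thetaOdd [TopologicalSpace X] (k : ℕ) (A : Set X) : Set X :=
  {x | ∀ U : Set X, SOpenNhd k x U → (U ∩ A).Nonempty}

/-- The S(2k)-closure `θ_{2k}(A)`. -/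
def thetaEven [TopologicalSpace X] (k : ℕ) (A : Set X) : Set X :=
  {x | ∀ U : Set X, SOpenNhd k x U → (closure U ∩ A).Nonempty}

/-- `D` is S(2k-1)-discrete. -/
def SOddDiscrete [TopologicalSpace X] (k : ℕ) (D : Set X) : Prop :=
  ∀ x ∈ D, ∃ U : Set X, SOpenNhd k x U ∧ U ∩ D = {x}

/-- `D` is S(2k)-discrete. -/
def SEvenDiscrete [TopologicalSpace X] (k : ℕ) (D : Set X) : Prop :=
  ∀ x ∈ D, ∃ U : Set X, SOpenNhd k x U ∧ closure U ∩ D = {x}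

/-- The S(2k-1)-spread `s_{2k-1}(X)`. -/
noncomputable def spreadOdd (k : ℕ) (X : Type u) [TopologicalSpace X] : Cardinal :=
  (⨆ D : {D : Set X // SOddDiscrete k D}, #D.1) ⊔ Cardinal.aleph0

/-- The S(2k)-spread `s_{2k}(X)`. -/
noncomputable def spreadEven (k : ℕ) (X : Type u) [TopologicalSpace X] : Cardinal :=
  (⨆ D : {D : Set X // SEvenDiscrete k D}, #D.1) ⊔ Cardinal.aleph0

/-- The S(2k-1)-cellularity `c_{2k-1}(X)`. -/
noncomputable def cellOdd (k : ℕ) (X : Type u) [TopologicalSpace X] : Cardinal :=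
  (⨆ F : {F : Set (Set X) // (∀ U ∈ F, SOpen k U ∧ U.Nonempty) ∧
      (∀ U ∈ F, ∀ V ∈ F, U ≠ V → U ∩ V = ∅)}, #F.1) ⊔ Cardinal.aleph0

/-- The S(2k)-cellularity `c_{2k}(X)`. -/
noncomputable def cellEven (k : ℕ) (X : Type u) [TopologicalSpace X] : Cardinal :=
  (⨆ F : {F : Set (Set X) // (∀ U ∈ F, SOpen k U ∧ U.Nonempty) ∧
      (∀ U ∈ F, ∀ V ∈ F, U ≠ V → closure U ∩ closure V = ∅)}, #F.1) ⊔ Cardinal.aleph0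

/-- The S(2k-1)-character `χ_{2k-1}(X)`. -/
noncomputable def charOdd (k : ℕ) (X : Type u) [TopologicalSpace X] : Cardinal :=
  sInf {c | Cardinal.aleph0 ≤ c ∧ ∀ x : X, ∃ B : Set (Set X), #B ≤ c ∧
    (∀ U ∈ B, SOpenNhd k x U) ∧
    ∀ U : Set X, SOpenNhd k x U → ∃ V ∈ B, V ⊆ U}

/-- The S(2k)-character `χ_{2k}(X)`. -/
noncomputable def charEven (k : ℕ) (X : Type u) [TopologicalSpace X] : Cardinal :=
  sInf {c | Cardinal.aleph0 ≤ c ∧ ∀ x : X, ∃ B : Set (Set X), #B ≤ c ∧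
    (∀ V ∈ B, IsClosed V ∧ SOddNhd k x V) ∧
    ∀ W : Set X, SOpenNhd k x W → ∃ V ∈ B, V ⊆ closure W}

/-- The S(2k-1)-pseudocharacter `ψ_{2k-1}(X)`. -/
noncomputable def psiOdd (k : ℕ) (X : Type u) [TopologicalSpace X] : Cardinal :=
  sInf {c | Cardinal.aleph0 ≤ c ∧ ∀ x : X, ∃ B : Set (Set X), #B ≤ c ∧
    (∀ U ∈ B, SOpenNhd k x U) ∧ ⋂₀ B = {x}}

/-- The S(2k)-pseudocharacter `ψ_{2k}(X)`. -/
noncomputable def psiEven (k : ℕ) (X : Type u) [TopologicalSpace X] : Cardinal :=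
  sInf {c | Cardinal.aleph0 ≤ c ∧ ∀ x : X, ∃ B : Set (Set X), #B ≤ c ∧
    (∀ U ∈ B, SOpenNhd k x U) ∧ (⋂ U ∈ B, closure U) = {x}}

/-- The usual pseudocharacter `ψ(X)`. -/
noncomputable def psi (X : Type u) [TopologicalSpace X] : Cardinal :=
  sInf {c | Cardinal.aleph0 ≤ c ∧ ∀ x : X, ∃ B : Set (Set X), #B ≤ c ∧
    (∀ U ∈ B, IsOpen U) ∧ ⋂₀ B = {x}}

private lemma chain_mono' {X : Type u} [TopologicalSpace X] {k : ℕ} (V : ℕ → Set X)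
    (h : ∀ i, i + 1 < k → closure (V i) ⊆ V (i+1)) : ∀ j, j < k → V 0 ⊆ V j := by
  intro j hj
  induction j with
  | zero => exact subset_rfl
  | succ n ih =>
      exact (ih (Nat.lt_of_succ_lt hj)).trans (subset_closure.trans (h n hj))

theorem stmt4 (X : Type u) [TopologicalSpace X] (k : ℕ) (hk : 1 ≤ k)
    (κ : Cardinal) (hκ : Cardinal.aleph0 ≤ κ) (hc : cellOdd k X ≤ κ)
    {ι : Type u} (U W : ι → Set X)
    (hU : ∀ i : ι, IsOpen (U i) ∧ ∃ V : ℕ → Set X, (∀ j < k, IsOpen (V j)) ∧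
      (∀ j, j + 1 < k → closure (V j) ⊆ V (j+1)) ∧
      V 0 = W i ∧ (W i).Nonempty ∧ V (k-1) = U i) :
    ∃ t : Set ι, #t ≤ κ ∧ (⋃ i : ι, W i) ⊆ thetaOdd k (⋃ i ∈ t, U i) := by
  classical
  set S : Set (Set (ι × Set X)) := {s | (∀ p ∈ s, SOpen k p.2 ∧ p.2.Nonempty ∧ p.2 ⊆ U p.1) ∧
    ∀ p ∈ s, ∀ q ∈ s, p ≠ q → p.2 ∩ U q.1 = ∅ ∨ q.2 ∩ U p.1 = ∅} with hSdef
  have hub : ∀ c ⊆ S, IsChain (· ⊆ ·) c → ∃ ub ∈ S, ∀ s ∈ c, s ⊆ ub := by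
    intro c hc hchain
    refine ⟨⋃₀ c, ⟨?_, ?_⟩, fun s hs => Set.subset_sUnion_of_mem hs⟩
    · rintro p ⟨s, hs, hp⟩
      exact (hc hs).1 p hp
    · rintro p ⟨s, hs, hp⟩ q ⟨s', hs', hq⟩ hpq
      rcases hchain.total hs hs' with h | h
      · exact (hc hs').2 p (h hp) q hq hpq
      · exact (hc hs).2 p hp q (h hq) hpq
  obtain ⟨m, hm⟩ := zorn_subset S hub
  have hmS : m ∈ S := hm.1
  refine ⟨Prod.fst '' m, ?_, ?_⟩
  · have hinj : Set.InjOn Prod.snd m := by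
      intro p hp q hq hpq
      by_contra hne
      rcases hmS.2 p hp q hq hne with h | h
      · obtain ⟨y, hy⟩ := (hmS.1 p hp).2.1
        have : y ∈ p.2 ∩ U q.1 := ⟨hy, (hmS.1 q hq).2.2 (hpq ▸ hy)⟩
        rw [h] at this; exact this
      · obtain ⟨y, hy⟩ := (hmS.1 q hq).2.1
        have : y ∈ q.2 ∩ U p.1 := ⟨hy, (hmS.1 p hp).2.2 (hpq ▸ hy)⟩
        rw [h] at this; exact this
    have hF : (∀ G ∈ Prod.snd '' m, SOpen k G ∧ G.Nonempty) ∧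
        (∀ G ∈ Prod.snd '' m, ∀ G' ∈ Prod.snd '' m, G ≠ G' → G ∩ G' = ∅) := by
      constructor
      · rintro G ⟨p, hp, rfl⟩
        exact ⟨(hmS.1 p hp).1, (hmS.1 p hp).2.1⟩
      · rintro G ⟨p, hp, rfl⟩ G' ⟨q, hq, rfl⟩ hne
        have hpq : p ≠ q := fun h => hne (by rw [h])
        rcases hmS.2 p hp q hq hpq with h | h
        · exact Set.eq_empty_of_subset_empty
            (h ▸ Set.inter_subset_inter_right _ (hmS.1 q hq).2.2)
        · rw [Set.inter_comm]
          exact Set.eq_empty_of_subset_empty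
            (h ▸ Set.inter_subset_inter_right _ (hmS.1 p hp).2.2)
    calc #(Prod.fst '' m) ≤ #m := Cardinal.mk_image_le
      _ = #(Prod.snd '' m) := (Cardinal.mk_image_eq_of_injOn _ _ hinj).symm
      _ ≤ cellOdd k X := by
          refine le_trans ?_ le_sup_left
          exact le_ciSup (Cardinal.bddAbove_range _)
            (⟨Prod.snd '' m, hF⟩ : {F : Set (Set X) // (∀ U ∈ F, SOpen k U ∧ U.Nonempty) ∧
              (∀ U ∈ F, ∀ V ∈ F, U ≠ V → U ∩ V = ∅)})
      _ ≤ κ := hc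
  · intro x hx
    obtain ⟨i0, hxW⟩ := Set.mem_iUnion.mp hx
    intro O hO
    by_contra hOA
    rw [Set.not_nonempty_iff_eq_empty] at hOA
    obtain ⟨hOopen, Oc, hOcOpen, hxO, hOcCl, hOcSub⟩ := hO
    obtain ⟨hUopen, V, hVopen, hVcl, hV0, hWne, hVk⟩ := hU i0
    set Z : ℕ → Set X := fun j => Oc j ∩ V j with hZ
    have hZcl : ∀ j, j + 1 < k → closure (Z j) ⊆ Z (j+1) := by
      intro j hj
      exact Set.subset_inter
        ((closure_mono Set.inter_subset_left).trans (hOcCl j hj))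
        ((closure_mono Set.inter_subset_right).trans (hVcl j hj))
    have hk1 : k - 1 < k := by omega
    have hxZ0 : x ∈ Z 0 := ⟨hxO, hV0 ▸ hxW⟩
    have hxG : x ∈ Z (k-1) := chain_mono' Z hZcl _ hk1 hxZ0
    have hGU : Z (k-1) ⊆ U i0 := fun y hy => hVk ▸ hy.2
    have hGO : Z (k-1) ⊆ O := Set.inter_subset_left.trans hOcSub
    have hGopen : SOpen k (Z (k-1)) :=
      ⟨(hOcOpen _ hk1).inter (hVopen _ hk1), x, Z,
        fun i hi => (hOcOpen i hi).inter (hVopen i hi), hxZ0, hZcl, subset_rfl⟩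
    have hGdisj : ∀ q ∈ m, Z (k-1) ∩ U q.1 = ∅ := by
      intro q hq
      apply Set.eq_empty_of_subset_empty
      calc Z (k-1) ∩ U q.1 ⊆ O ∩ ⋃ i ∈ Prod.fst '' m, U i :=
            Set.inter_subset_inter hGO (Set.subset_biUnion_of_mem ⟨q, hq, rfl⟩)
        _ = ∅ := hOA
    have hnew : insert (i0, Z (k-1)) m ∈ S := by
      constructor
      · intro p hp
        rcases Set.mem_insert_iff.mp hp with rfl | hp
        · exact ⟨hGopen, ⟨x, hxG⟩, hGU⟩
        · exact hmS.1 p hp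
      · intro p hp q hq hpq
        rcases Set.mem_insert_iff.mp hp with rfl | hp
        · rcases Set.mem_insert_iff.mp hq with rfl | hq
          · exact absurd rfl hpq
          · exact Or.inl (hGdisj q hq)
        · rcases Set.mem_insert_iff.mp hq with rfl | hq
          · exact Or.inr (hGdisj p hp)
          · exact hmS.2 p hp q hq hpq
    have hmem : (i0, Z (k-1)) ∈ m := hm.2 hnew (Set.subset_insert _ _) (Set.mem_insert _ _)
    have : x ∈ O ∩ ⋃ i ∈ Prod.fst '' m, U i :=
      ⟨hGO hxG, Set.mem_biUnion ⟨_, hmem, rfl⟩ (hGU hxG)⟩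
    rw [hOA] at this
    exact this
end

section
/- Let k be a positive integer. If X is an S(2k-1)-space, then |X| ≤ 2^{c_{2k-1}(X)·χ_{2k-1}(X)}. -/
open Cardinal Set

universe u

variable {X : Type u}

section Aux

variable {X : Type u} [TopologicalSpace X] {k : ℕ}

lemma chain_mono {V : ℕ → Set X} (hc : ∀ i, i + 1 < k → closure (V i) ⊆ V (i + 1))
    {i : ℕ} (hi : i < k) : V 0 ⊆ V i := by
  induction i with
  | zero => exact subset_rfl
  | succ n ih =>
    exact (ih (by omega)).trans (subset_closure.trans (hc n hi))

lemma SOddNhd.mem (hk : 1 ≤ k) {x : X} {U : Set X} (h : SOddNhd k x U) : x ∈ U := by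
  obtain ⟨V, hop, hx, hc, hsub⟩ := h
  exact hsub (chain_mono hc (by omega) hx)

lemma SOpenNhd.mem (hk : 1 ≤ k) {x : X} {U : Set X} (h : SOpenNhd k x U) : x ∈ U :=
  h.2.mem hk

lemma SOpenNhd.inter {x : X} {U U' : Set X} (h : SOpenNhd k x U) (h' : SOpenNhd k x U') :
    SOpenNhd k x (U ∩ U') := by
  obtain ⟨hU, V, hop, hx, hc, hsub⟩ := h
  obtain ⟨hU', W, hop', hx', hc', hsub'⟩ := h'
  refine ⟨hU.inter hU', fun i => V i ∩ W i, fun i hi => (hop i hi).inter (hop' i hi),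
    ⟨hx, hx'⟩, fun i hi => ?_, inter_subset_inter hsub hsub'⟩
  exact ((closure_inter_subset_inter_closure _ _).trans
    (inter_subset_inter (hc i hi) (hc' i hi)))

lemma sOpenNhd_univ (x : X) : SOpenNhd k x (univ : Set X) :=
  ⟨isOpen_univ, fun _ => univ, fun _ _ => isOpen_univ, mem_univ x,
    fun _ _ => by simp, subset_univ _⟩

lemma sep (hk : 1 ≤ k) (h : SSpace (2 * k - 1) X) {x q : X} (hxq : x ≠ q) :
    ∃ U W : Set X, SOpenNhd k x U ∧ SOpenNhd k q W ∧ U ∩ W = ∅ := by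
  have hsep := h x q hxq
  have h21 : 2 * k - 1 = (2 * k - 2) + 1 := by omega
  rw [h21] at hsep
  obtain ⟨U, hop, hx0, hc, hlast⟩ := hsep
  set n := 2 * k - 2 with hn
  refine ⟨U (k - 1), (closure (U (k - 1)))ᶜ, ?_, ?_, ?_⟩
  · exact ⟨hop _ (by omega), U, fun i hi => hop i (by omega), hx0,
      fun i hi => hc i (by omega), subset_rfl⟩
  · refine ⟨isClosed_closure.isOpen_compl, fun i => (closure (U (n - i)))ᶜ,
      fun i hi => isClosed_closure.isOpen_compl, ?_, ?_, ?_⟩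
    · intro hq
      have : q ∈ closure (U n) ∩ {q} := ⟨by simpa using hq, rfl⟩
      simp [hlast] at this
    · intro i hi
      intro z hz
      have hj : n - i - 1 = n - (i + 1) := by omega
      have hj1 : n - i - 1 < n := by omega
      intro hz2
      -- hz2 : z ∈ closure (U (n - (i+1)))
      have hzU : z ∈ U (n - i) := by
        have := hc (n - i - 1) (by omega)
        rw [show n - i - 1 + 1 = n - i by omega] at this
        exact this (by rwa [hj])
      rw [mem_closure_iff] at hz
      obtain ⟨w, hw1, hw2⟩ := hz (U (n - i)) (hop _ (by omega)) hzU
      exact hw2 (subset_closure hw1)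
    · simp only []
      rw [show n - (k - 1) = k - 1 by omega]
  · ext z
    simp only [mem_inter_iff, mem_compl_iff, mem_empty_iff_false, iff_false, not_and, not_not]
    exact fun hz => subset_closure hz

lemma not_mem_thetaOdd {x : X} {A : Set X} {U : Set X} (hU : SOpenNhd k x U)
    (hUA : U ∩ A = ∅) : x ∉ thetaOdd k A := by
  intro hx
  have := hx U hU
  rw [hUA] at this
  simp at this

lemma exists_of_not_mem_thetaOdd {x : X} {A : Set X} (hx : x ∉ thetaOdd k A) :
    ∃ U : Set X, SOpenNhd k x U ∧ U ∩ A = ∅ := by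
  simp only [thetaOdd, mem_setOf_eq, not_forall] at hx
  obtain ⟨U, hU, hne⟩ := hx
  exact ⟨U, hU, by rwa [not_nonempty_iff_eq_empty] at hne⟩

end Aux
section Extraction

variable {X : Type u} [TopologicalSpace X] {k : ℕ}

lemma cell_le_of_family {F : Set (Set X)} (h1 : ∀ U ∈ F, SOpen k U ∧ U.Nonempty)
    (h2 : ∀ U ∈ F, ∀ V ∈ F, U ≠ V → U ∩ V = ∅) : #F ≤ cellOdd k X := by
  refine le_trans ?_ le_sup_left
  have hb : BddAbove (Set.range fun F : {F : Set (Set X) // (∀ U ∈ F, SOpen k U ∧ U.Nonempty) ∧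
      (∀ U ∈ F, ∀ V ∈ F, U ≠ V → U ∩ V = ∅)} => #F.1) := by
    refine ⟨#(Set X), ?_⟩
    rintro c ⟨F, rfl⟩
    exact mk_set_le _
  exact le_ciSup hb (⟨F, h1, h2⟩ : {F : Set (Set X) // (∀ U ∈ F, SOpen k U ∧ U.Nonempty) ∧
      (∀ U ∈ F, ∀ V ∈ F, U ≠ V → U ∩ V = ∅)})

lemma extraction (hk : 1 ≤ k) (S : Set X) (v : X → Set X)
    (hv : ∀ x ∈ S, SOpenNhd k x (v x)) :
    ∃ T ⊆ S, #T ≤ cellOdd k X ∧ S ⊆ thetaOdd k (⋃ x ∈ T, v x) := by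
  classical
  set 𝒜 : Set (Set (X × Set X)) :=
    {M | (∀ p ∈ M, p.1 ∈ S ∧ SOpenNhd k p.1 p.2 ∧ p.2 ⊆ v p.1) ∧
      ∀ p ∈ M, ∀ r ∈ M, p ≠ r → p.2 ∩ r.2 = ∅} with h𝒜
  obtain ⟨M, hM⟩ : ∃ M, Maximal (· ∈ 𝒜) M := by
    refine zorn_subset 𝒜 ?_
    intro c hc hchain
    refine ⟨⋃₀ c, ⟨?_, ?_⟩, fun s hs => subset_sUnion_of_mem hs⟩
    · rintro p ⟨a, ha, hpa⟩
      exact (hc ha).1 p hpa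
    · rintro p ⟨a, ha, hpa⟩ r ⟨b, hb, hrb⟩ hpr
      rcases hchain.total ha hb with hab | hba
      · exact (hc hb).2 p (hab hpa) r hrb hpr
      · exact (hc ha).2 p hpa r (hba hrb) hpr
  have hM1 := hM.prop.1
  have hM2 := hM.prop.2
  refine ⟨Prod.fst '' M, ?_, ?_, ?_⟩
  · rintro x ⟨p, hp, rfl⟩; exact (hM1 p hp).1
  · -- cardinality
    have hinj : InjOn Prod.snd M := by
      intro p hp r hr hpr
      by_contra hne
      have := hM2 p hp r hr hne
      have hmem : p.1 ∈ p.2 ∩ r.2 := ⟨((hM1 p hp).2.1).mem hk, hpr ▸ ((hM1 p hp).2.1).mem hk⟩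
      rw [this] at hmem
      exact hmem
    calc #(Prod.fst '' M) ≤ #M := mk_image_le
      _ = #(Prod.snd '' M) := (mk_image_eq_of_injOn _ _ hinj).symm
      _ ≤ cellOdd k X := by
        refine cell_le_of_family ?_ ?_
        · rintro U ⟨p, hp, rfl⟩
          obtain ⟨h1, h2, _⟩ := hM1 p hp
          exact ⟨⟨h2.1, p.1, h2.2⟩, p.1, h2.mem hk⟩
        · rintro U ⟨p, hp, rfl⟩ V ⟨r, hr, rfl⟩ hUV
          exact hM2 p hp r hr (fun hh => hUV (by rw [hh]))
  · -- S ⊆ θ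
    intro z hz
    by_contra hzθ
    obtain ⟨Q, hQ, hQE⟩ := exists_of_not_mem_thetaOdd hzθ
    set E := ⋃ x ∈ Prod.fst '' M, v x with hE
    have hvz := hv z hz
    set p0 : X × Set X := (z, Q ∩ v z) with hp0
    have hp0M : p0 ∉ M := by
      intro hmem
      have hzE : z ∈ E := by
        refine mem_biUnion ⟨p0, hmem, rfl⟩ (hvz.mem hk)
      have : z ∈ Q ∩ E := ⟨hQ.mem hk, hzE⟩
      rw [hQE] at this
      exact this
    have hdisj : ∀ r ∈ M, (Q ∩ v z) ∩ r.2 = ∅ := by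
      intro r hr
      have hsub : (Q ∩ v z) ∩ r.2 ⊆ Q ∩ E := by
        rintro w ⟨⟨hw1, _⟩, hw3⟩
        exact ⟨hw1, mem_biUnion ⟨r, hr, rfl⟩ ((hM1 r hr).2.2 hw3)⟩
      rw [← subset_empty_iff, ← hQE]
      exact hsub
    have hins : insert p0 M ∈ 𝒜 := by
      constructor
      · rintro p (rfl | hp)
        · exact ⟨hz, hQ.inter hvz, inter_subset_right⟩
        · exact hM1 p hp
      · rintro p (rfl | hp) r (rfl | hr) hpr
        · exact absurd rfl hpr
        · exact hdisj r hr
        · rw [inter_comm]; exact hdisj p hp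
        · exact hM2 p hp r hr hpr
    have := hM.2 hins (subset_insert _ _) (mem_insert _ _)
    exact hp0M this
end Extraction
set_option linter.unusedSectionVars false

section Machine

variable {X : Type u} [TopologicalSpace X]

open Classical in
noncomputable def witPt (k : ℕ) {I J : Type u} (e : X → J → Set X) (x₀ : X)
    (c : I → I → X × J) : X :=
  if h : ((⋃ i, thetaOdd k (⋃ j, e (c i j).1 (c i j).2))ᶜ : Set X).Nonempty
  then h.choose else x₀

open Classical in
lemma witPt_spec (k : ℕ) {I J : Type u} (e : X → J → Set X) (x₀ : X) (c : I → I → X × J)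
    (h : ((⋃ i, thetaOdd k (⋃ j, e (c i j).1 (c i j).2))ᶜ : Set X).Nonempty) :
    witPt k e x₀ c ∈ ((⋃ i, thetaOdd k (⋃ j, e (c i j).1 (c i j).2))ᶜ : Set X) := by
  rw [witPt, dif_pos h]; exact h.choose_spec

def stepSet (k : ℕ) (I J : Type u) (e : X → J → Set X) (x₀ : X) (A : Set X) : Set X :=
  A ∪ Set.range (fun c : I → I → A × J => witPt k e x₀ (fun i j => (((c i j).1 : X), (c i j).2)))

lemma subset_stepSet (k : ℕ) (I J : Type u) (e : X → J → Set X) (x₀ : X) (A : Set X) :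
    A ⊆ stepSet k I J e x₀ A := subset_union_left

lemma stepSet_card (k : ℕ) (I J : Type u) (e : X → J → Set X) (x₀ : X) (A : Set X) :
    #(stepSet k I J e x₀ A) ≤ #A + (#A * #J) ^ (#I * #I) := by
  refine (mk_union_le _ _).trans (add_le_add le_rfl ?_)
  refine mk_range_le.trans ?_
  have h1 : #(I → I → A × J) = (#(A × J)) ^ (#I * #I) := by
    rw [Cardinal.power_mul, Cardinal.power_def, Cardinal.power_def]
  rw [h1]
  have h2 : #(A × J) = #A * #J := by simp [Cardinal.mk_prod]
  rw [h2]

noncomputable def Hchain (k : ℕ) (I J : Type u) (e : X → J → Set X) (x₀ : X)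
    (O : Type u) [LinearOrder O] [WellFoundedLT O] : O → Set X :=
  WellFounded.fix wellFounded_lt
    (fun z ih => stepSet k I J e x₀ ({x₀} ∪ ⋃ y : Set.Iio z, ih y y.2))

lemma Hchain_eq (k : ℕ) (I J : Type u) (e : X → J → Set X) (x₀ : X)
    (O : Type u) [LinearOrder O] [WellFoundedLT O] (z : O) :
    Hchain k I J e x₀ O z =
      stepSet k I J e x₀ ({x₀} ∪ ⋃ y : Set.Iio z, Hchain k I J e x₀ O y) :=
  WellFounded.fix_eq _ _ _

end Machine

section CharFacts

variable {X : Type u} [TopologicalSpace X]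

lemma charOdd_mem (k : ℕ) (X : Type u) [TopologicalSpace X] :
    Cardinal.aleph0 ≤ charOdd k X ∧ ∀ x : X, ∃ B : Set (Set X), #B ≤ charOdd k X ∧
      (∀ U ∈ B, SOpenNhd k x U) ∧ ∀ U : Set X, SOpenNhd k x U → ∃ V ∈ B, V ⊆ U := by
  have hne : {c : Cardinal | Cardinal.aleph0 ≤ c ∧ ∀ x : X, ∃ B : Set (Set X), #B ≤ c ∧
      (∀ U ∈ B, SOpenNhd k x U) ∧ ∀ U : Set X, SOpenNhd k x U → ∃ V ∈ B, V ⊆ U}.Nonempty := by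
    refine ⟨max Cardinal.aleph0 #(Set X), le_max_left _ _, fun x => ⟨{U | SOpenNhd k x U},
      (mk_set_le _).trans (le_max_right _ _), fun U hU => hU, fun U hU => ⟨U, hU, subset_rfl⟩⟩⟩
  exact csInf_mem hne

lemma exists_surjective_of_mk_le {α β : Type u} [Nonempty β] (h : #β ≤ #α) :
    ∃ f : α → β, Function.Surjective f := by
  obtain ⟨g⟩ := (Cardinal.le_def β α).1 h
  exact ⟨Function.invFun g, Function.invFun_surjective g.injective⟩

end CharFacts
theorem stmt6 (k : ℕ) (hk : 1 ≤ k) (X : Type u) [TopologicalSpace X]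
    (h : SSpace (2 * k - 1) X) :
    #X ≤ 2 ^ (cellOdd k X * charOdd k X) := by
  classical
  rcases isEmpty_or_nonempty X with hX | hX
  · simp [mk_eq_zero X]
  obtain ⟨x₀⟩ := hX
  obtain ⟨hchi0, hbase⟩ := charOdd_mem k X
  set χ := charOdd k X with hχdef
  set c := cellOdd k X with hcdef
  set κ := c * χ with hκdef
  have hcc0 : ℵ₀ ≤ c := le_sup_right
  have hcκ : c ≤ κ := by
    conv_lhs => rw [← mul_one c]
    exact mul_le_mul_right (one_le_aleph0.trans hchi0) c
  have hχκ : χ ≤ κ := by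
    conv_lhs => rw [← one_mul χ]
    exact mul_le_mul_left (one_le_aleph0.trans hcc0) χ
  have hkap0 : ℵ₀ ≤ κ := hcc0.trans hcκ
  have hκκ : κ * κ = κ := mul_eq_self hkap0
  have hκ2 : κ ≤ (2 : Cardinal.{u}) ^ κ := (cantor κ).le
  have h2k0 : ℵ₀ ≤ (2 : Cardinal.{u}) ^ κ := hkap0.trans hκ2
  have hpow : ((2 : Cardinal.{u}) ^ κ) ^ κ = (2 : Cardinal.{u}) ^ κ := by rw [← power_mul, hκκ]
  have h22 : (2 : Cardinal.{u}) ^ κ * (2 : Cardinal.{u}) ^ κ = (2 : Cardinal.{u}) ^ κ := mul_eq_self h2k0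
  choose B hB1 hB2 hB3 using hbase
  -- the index types
  set J := χ.out with hJdef
  have hJ : #J = χ := mk_out χ
  have hJne : Nonempty J := by
    rw [← mk_ne_zero_iff, hJ]; exact (aleph0_pos.trans_le hchi0).ne'
  set I := κ.out with hIdef
  have hI : #I = κ := mk_out κ
  -- enumerations of the bases
  have he : ∀ x : X, ∃ f : J → Set X, Set.range f = insert ∅ (B x) := by
    intro x
    have h1 : #(insert ∅ (B x) : Set (Set X)) ≤ #J := by
      rw [hJ]
      calc #(insert ∅ (B x) : Set (Set X)) ≤ #(B x) + 1 := mk_insert_le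
        _ ≤ χ + 1 := add_le_add_left (hB1 x) 1
        _ ≤ χ + χ := add_le_add_right (one_le_aleph0.trans hchi0) χ
        _ = χ := add_eq_self hchi0
    have hne : Nonempty ↥(insert ∅ (B x) : Set (Set X)) := ⟨⟨∅, mem_insert _ _⟩⟩
    obtain ⟨f, hf⟩ := exists_surjective_of_mk_le h1
    refine ⟨fun j => (f j : Set X), ?_⟩
    rw [show (fun j => (f j : Set X)) = Subtype.val ∘ f from rfl, Set.range_comp,
      hf.range_eq, Set.image_univ, Subtype.range_coe]
  choose e he using he
  -- the ordinal frame
  set O := (Order.succ κ).ord.ToType with hOdef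
  letI : IsWellOrder O (· < ·) := isWellOrder_lt
  have hsreg : (Order.succ κ).IsRegular := isRegular_succ hkap0
  have hsucc0 : ℵ₀ ≤ Order.succ κ := hkap0.trans (Order.le_succ κ)
  have hOcard : #O = Order.succ κ := mk_ord_toType _
  have hOne : Nonempty O := by
    rw [← mk_ne_zero_iff, hOcard]
    exact (aleph0_pos.trans_le hsucc0).ne'
  set Hc : O → Set X := Hchain k I J e x₀ O with hHcdef
  have hHeq : ∀ z : O, Hc z = stepSet k I J e x₀ ({x₀} ∪ ⋃ y : Set.Iio z, Hc y) :=
    Hchain_eq k I J e x₀ O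
  -- cardinality of the stages
  have hstage : ∀ z : O, #(Hc z) ≤ (2 : Cardinal.{u}) ^ κ := by
    intro z
    refine (wellFounded_lt (α := (Order.succ κ).ord.ToType)).induction (C := fun z => #(Hc z) ≤ (2 : Cardinal.{u}) ^ κ) z ?_
    intro z ih
    have hIio : #(Set.Iio z) ≤ κ := by
      have := mk_Iio_ord_toType z
      exact Order.lt_succ_iff.1 this
    have hA : #({x₀} ∪ ⋃ y : Set.Iio z, Hc y : Set X) ≤ (2 : Cardinal.{u}) ^ κ := by
      refine (mk_union_le _ _).trans ?_
      have h1 : #({x₀} : Set X) ≤ (2 : Cardinal.{u}) ^ κ := by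
        rw [mk_singleton]
        exact le_trans (one_le_aleph0) h2k0
      have h2 : #(⋃ y : Set.Iio z, Hc y) ≤ (2 : Cardinal.{u}) ^ κ := by
        refine (mk_iUnion_le _).trans ?_
        have hsup : ⨆ y : Set.Iio z, #(Hc y) ≤ (2 : Cardinal.{u}) ^ κ := by
          rcases isEmpty_or_nonempty (Set.Iio z) with hE | hE
          · simp [ciSup_of_empty]
          · exact ciSup_le' fun y => ih y y.2
        calc #(Set.Iio z) * ⨆ y : Set.Iio z, #(Hc ↑y) ≤ (2 : Cardinal.{u}) ^ κ * (2 : Cardinal.{u}) ^ κ :=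
              mul_le_mul' (hIio.trans hκ2) hsup
            _ = (2 : Cardinal.{u}) ^ κ := h22
      calc #({x₀} : Set X) + #(⋃ y : Set.Iio z, Hc ↑y) ≤ (2 : Cardinal.{u}) ^ κ + (2 : Cardinal.{u}) ^ κ := add_le_add h1 h2
        _ = (2 : Cardinal.{u}) ^ κ := add_eq_self h2k0
    rw [hHeq z]
    refine (stepSet_card k I J e x₀ _).trans ?_
    have hbase2 : #({x₀} ∪ ⋃ y : Set.Iio z, Hc ↑y : Set X) * #J ≤ (2 : Cardinal.{u}) ^ κ := by
      calc #({x₀} ∪ ⋃ y : Set.Iio z, Hc ↑y : Set X) * #J ≤ (2 : Cardinal.{u}) ^ κ * (2 : Cardinal.{u}) ^ κ :=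
            mul_le_mul' hA (by rw [hJ]; exact hχκ.trans hκ2)
        _ = (2 : Cardinal.{u}) ^ κ := h22
    have hexp : (#({x₀} ∪ ⋃ y : Set.Iio z, Hc ↑y : Set X) * #J) ^ (#I * #I) ≤ (2 : Cardinal.{u}) ^ κ := by
      calc (#({x₀} ∪ ⋃ y : Set.Iio z, Hc ↑y : Set X) * #J) ^ (#I * #I)
          ≤ ((2 : Cardinal.{u}) ^ κ) ^ (#I * #I) := power_le_power_right hbase2
        _ = (2 : Cardinal.{u}) ^ κ := by rw [hI, hκκ, hpow]
    calc #({x₀} ∪ ⋃ y : Set.Iio z, Hc ↑y : Set X) +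
          (#({x₀} ∪ ⋃ y : Set.Iio z, Hc ↑y : Set X) * #J) ^ (#I * #I)
        ≤ (2 : Cardinal.{u}) ^ κ + (2 : Cardinal.{u}) ^ κ := add_le_add hA hexp
      _ = (2 : Cardinal.{u}) ^ κ := add_eq_self h2k0
  -- the big set H
  set H : Set X := ⋃ z : O, Hc z with hHdef
  have hHcard : #H ≤ (2 : Cardinal.{u}) ^ κ := by
    refine (mk_iUnion_le _).trans ?_
    calc #O * ⨆ z : O, #(Hc z) ≤ (2 : Cardinal.{u}) ^ κ * (2 : Cardinal.{u}) ^ κ := by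
          refine mul_le_mul' ?_ (ciSup_le' hstage)
          rw [hOcard]
          exact (Order.succ_le_of_lt (cantor κ))
      _ = (2 : Cardinal.{u}) ^ κ := h22
  -- it suffices to show H = univ
  suffices huniv : H = Set.univ by
    have : #X = #H := by rw [huniv, mk_univ]
    rw [this]
    exact hHcard
  by_contra hne
  obtain ⟨q, hq⟩ : ∃ q, q ∉ H := by
    by_contra hq
    push_neg at hq
    exact hne (Set.eq_univ_of_forall hq)
  -- separating data
  have hvb0 : ∀ x : X, ∃ vv bb : Set X, x ∈ H → vv ∈ B x ∧ bb ∈ B q ∧ vv ∩ bb = ∅ := by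
    intro x
    by_cases hx : x ∈ H
    · obtain ⟨U, W, hU, hW, hUW⟩ := sep hk h (show x ≠ q from fun hh => hq (hh ▸ hx))
      obtain ⟨vv, hvv, hvvU⟩ := hB3 x U hU
      obtain ⟨bb, hbb, hbbW⟩ := hB3 q W hW
      refine ⟨vv, bb, fun _ => ⟨hvv, hbb, ?_⟩⟩
      rw [← Set.subset_empty_iff, ← hUW]
      exact Set.inter_subset_inter hvvU hbbW
    · exact ⟨∅, ∅, fun hh => absurd hh hx⟩
  choose v b hvb using hvb0
  -- the extracted subfamilies
  have hText : ∀ b0 : Set X, ∃ T, T ⊆ {x ∈ H | b x = b0} ∧ #T ≤ c ∧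
      {x ∈ H | b x = b0} ⊆ thetaOdd k (⋃ x ∈ T, v x) := by
    intro b0
    exact extraction hk _ v (fun x hx => hB2 x (v x) (hvb x hx.1).1)
  choose T hT1 hT2 hT3 using hText
  -- the point set P
  set P : Set X := ⋃ b0 ∈ B q, T b0 with hPdef
  have hPH : P ⊆ H := by
    rintro x hx
    obtain ⟨b0, hb0, hxT⟩ := Set.mem_iUnion₂.1 hx
    exact (hT1 b0 hxT).1
  have hPcard : #P ≤ κ := by
    refine (mk_biUnion_le _ _).trans ?_
    have hsup : ⨆ b0 : B q, #(T b0) ≤ c := by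
      rcases isEmpty_or_nonempty (B q) with hE | hE
      · simp [ciSup_of_empty]
      · exact ciSup_le' fun b0 => hT2 b0
    calc #(B q) * ⨆ b0 : B q, #(T ↑b0) ≤ κ * κ :=
          mul_le_mul' ((hB1 q).trans hχκ) (hsup.trans hcκ)
      _ = κ := hκκ
  -- find a stage above P
  obtain ⟨z, hz⟩ : ∃ z : O, ∀ x : P, ∃ y : O, y < z ∧ (x : X) ∈ Hc y := by
    have hmem : ∀ x : P, ∃ w : O, (x : X) ∈ Hc w := by
      intro x
      exact Set.mem_iUnion.1 (hPH x.2)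
    choose f hf using hmem
    set g : P → Ordinal := fun x => Order.succ (Ordinal.typein (α := (Order.succ κ).ord.ToType) (· < ·) (f x)) with hgdef
    have hg : ∀ x : P, g x < (Order.succ κ).ord := by
      intro x
      refine (isSuccLimit_ord hsucc0).succ_lt ?_
      have := Ordinal.typein_lt_type (α := (Order.succ κ).ord.ToType) (· < ·) (f x)
      rwa [Ordinal.type_toType] at this
    have hsup : iSup g < (Order.succ κ).ord := by
      refine Ordinal.iSup_lt_ord ?_ hg
      rw [hsreg.cof_eq]
      exact hPcard.trans_lt (Order.lt_succ κ)
    refine ⟨Ordinal.enum (α := (Order.succ κ).ord.ToType) (· < ·) ⟨iSup g, by rwa [Ordinal.type_toType]⟩, ?_⟩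
    intro x
    refine ⟨f x, ?_, hf x⟩
    have h1 : Ordinal.typein (α := (Order.succ κ).ord.ToType) (· < ·) (f x) <
        Ordinal.typein (α := (Order.succ κ).ord.ToType) (· < ·) (Ordinal.enum (α := (Order.succ κ).ord.ToType) (· < ·)
          ⟨iSup g, by rwa [Ordinal.type_toType]⟩) := by
      erw [Ordinal.typein_enum]
      exact lt_of_lt_of_le (Order.lt_succ _) (Ordinal.le_iSup g x)
    exact (Ordinal.typein_lt_typein (· < ·)).1 h1
  set Az : Set X := {x₀} ∪ ⋃ y : Set.Iio z, Hc y with hAzdef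
  have hPA : P ⊆ Az := by
    intro x hx
    obtain ⟨y, hy, hmem⟩ := hz ⟨x, hx⟩
    exact Or.inr (Set.mem_iUnion.2 ⟨⟨y, hy⟩, hmem⟩)
  have hx₀A : x₀ ∈ Az := Or.inl rfl
  -- B q is nonempty, get a surjection σ
  have hBqne : Nonempty ↥(B q) := by
    obtain ⟨V, hV, _⟩ := hB3 q Set.univ (sOpenNhd_univ q)
    exact ⟨⟨V, hV⟩⟩
  obtain ⟨σ, hσ⟩ : ∃ σ : I → ↥(B q), Function.Surjective σ := by
    refine exists_surjective_of_mk_le ?_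
    rw [hI]
    exact (hB1 q).trans hχκ
  -- selections of indices
  have hjsel0 : ∀ x : X, ∃ j : J, x ∈ H → e x j = v x := by
    intro x
    by_cases hx : x ∈ H
    · have : v x ∈ Set.range (e x) := by
        rw [he x]; exact Set.mem_insert_of_mem _ (hvb x hx).1
      obtain ⟨j, hj⟩ := this
      exact ⟨j, fun _ => hj⟩
    · exact ⟨Classical.arbitrary J, fun hh => absurd hh hx⟩
  choose jsel hjsel using hjsel0
  have hjem0 : ∀ x : X, ∃ j : J, e x j = ∅ := by
    intro x
    have : (∅ : Set X) ∈ Set.range (e x) := by rw [he x]; exact Set.mem_insert _ _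
    exact this
  choose jem hjem using hjem0
  -- realize each extracted family as an I-indexed union
  have hgc : ∀ b0 : Set X, ∃ g : I → X × J, (∀ i, (g i).1 ∈ insert x₀ (T b0)) ∧
      (⋃ i, e (g i).1 (g i).2) = ⋃ x ∈ T b0, v x := by
    intro b0
    rcases (T b0).eq_empty_or_nonempty with hT0 | hT0
    · refine ⟨fun _ => (x₀, jem x₀), fun i => Set.mem_insert _ _, ?_⟩
      simp [hjem, hT0]
    · have hTH : T b0 ⊆ H := fun x hx => (hT1 b0 hx).1
      have hcard : #(↥(T b0)) ≤ #I := by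
        rw [hI]; exact (hT2 b0).trans hcκ
      have : Nonempty ↥(T b0) := hT0.to_subtype
      obtain ⟨t, ht⟩ := exists_surjective_of_mk_le hcard
      refine ⟨fun i => ((t i : X), jsel (t i)), fun i => Set.mem_insert_of_mem _ (t i).2, ?_⟩
      apply subset_antisymm
      · refine Set.iUnion_subset fun i => ?_
        rw [hjsel (t i) (hTH (t i).2)]
        exact Set.subset_biUnion_of_mem (t i).2
      · refine Set.iUnion₂_subset fun x hx => ?_
        obtain ⟨i, hi⟩ := ht ⟨x, hx⟩
        refine Set.subset_iUnion_of_subset i ?_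
        rw [hjsel (t i) (hTH (t i).2), hi]
  choose g hg1 hg2 using hgc
  -- the task
  have htaskmem : ∀ (i : I) (j : I), (g (σ i) j).1 ∈ Az := by
    intro i j
    rcases hg1 (σ i) j with hh | hh
    · rw [hh]; exact hx₀A
    · exact hPA (Set.mem_biUnion (σ i).2 hh)
  set task : I → I → ↥Az × J := fun i j => (⟨(g (σ i) j).1, htaskmem i j⟩, (g (σ i) j).2)
    with htaskdef
  set craw : I → I → X × J := fun i j => ((g (σ i) j).1, (g (σ i) j).2) with hcrawdef
  -- the theta sets are the extracted families
  have hEi : ∀ i : I, (⋃ j, e (craw i j).1 (craw i j).2) = ⋃ x ∈ T (σ i), v x := fun i =>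
    hg2 (σ i)
  -- q avoids every theta set
  have hqmem : q ∈ ((⋃ i, thetaOdd k (⋃ j, e (craw i j).1 (craw i j).2))ᶜ : Set X) := by
    rw [Set.mem_compl_iff, Set.mem_iUnion]
    rintro ⟨i, hqθ⟩
    rw [hEi i] at hqθ
    refine not_mem_thetaOdd (hB2 q (σ i) (σ i).2) ?_ hqθ
    ext w
    simp only [Set.mem_inter_iff, Set.mem_empty_iff_false, iff_false, not_and]
    intro hw1 hw2
    obtain ⟨x, hxT, hwv⟩ := Set.mem_iUnion₂.1 hw2
    have hxS := hT1 (σ i) hxT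
    have hdisj := (hvb x hxS.1).2.2
    have : w ∈ v x ∩ b x := ⟨hwv, by rw [hxS.2]; exact hw1⟩
    rw [hdisj] at this
    exact this
  -- the witness point
  set y : X := witPt k e x₀ craw with hydef
  have hywit := witPt_spec k e x₀ craw ⟨q, hqmem⟩
  have hyH : y ∈ H := by
    have hystep : y ∈ stepSet k I J e x₀ Az := Or.inr ⟨task, rfl⟩
    have : y ∈ Hc z := by rw [hHeq z]; exact hystep
    exact Set.mem_iUnion.2 ⟨z, this⟩
  -- contradiction
  have hbyq : b y ∈ B q := (hvb y hyH).2.1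
  obtain ⟨i, hi⟩ := hσ ⟨b y, hbyq⟩
  have hyθ : y ∈ thetaOdd k (⋃ x ∈ T (b y), v x) := hT3 (b y) ⟨hyH, rfl⟩
  have : y ∈ ⋃ i, thetaOdd k (⋃ j, e (craw i j).1 (craw i j).2) := by
    refine Set.mem_iUnion.2 ⟨i, ?_⟩
    rw [hEi i, hi]
    exact hyθ
  exact hywit this
end

section
/- Let k be a positive integer. If X is an S(2k)-space, then |X| ≤ 2^{c_{2k}(X)·χ_{2k}(X)}. -/
open Cardinal Set

universe u

variable {X : Type u}

namespace ERtmp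
open Ordinal Classical

noncomputable def tyin {o : Ordinal.{u}} (b : o.ToType) : Ordinal.{u} :=
  @typein o.ToType (· < ·) isWellOrder_lt b

theorem tyin_lt {o : Ordinal.{u}} (b : o.ToType) : tyin b < o := typein_lt_self b

theorem tyin_inj {o : Ordinal.{u}} {a b : o.ToType} (h : tyin a = tyin b) : a = b :=
  (@typein_inj o.ToType (· < ·) isWellOrder_lt a b).mp h

theorem tyin_lt_tyin {o : Ordinal.{u}} {a b : o.ToType} : tyin a < tyin b ↔ a < b :=
  @typein_lt_typein o.ToType (· < ·) isWellOrder_lt a b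

noncomputable def enm {o : Ordinal.{u}} (β : Ordinal.{u}) (h : β < o) : o.ToType :=
  (@enum o.ToType (· < ·) isWellOrder_lt) ⟨β, by rwa [type_toType]⟩

theorem tyin_enm {o β : Ordinal.{u}} (h : β < o) : tyin (enm β h) = β :=
  @typein_enum o.ToType (· < ·) isWellOrder_lt β (by rwa [type_toType])

variable {X I : Type u} (c : X → X → I)

noncomputable def wfX : WellFounded (WellOrderingRel : X → X → Prop) :=
  (WellOrderingRel.isWellOrder).toIsWellFounded.wf

noncomputable def chain (x : X) : Ordinal.{u} → X :=
  Ordinal.lt_wf.fix fun α ih =>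
    let S := {y : X | ∀ β (h : β < α), ih β h ≠ y ∧ c (ih β h) y = c (ih β h) x}
    if hS : S.Nonempty then wfX.min S hS else x

/-- candidate set at stage `α` for target `x`. -/
def Sset (x : X) (α : Ordinal.{u}) : Set X :=
  {y | ∀ β < α, chain c x β ≠ y ∧ c (chain c x β) y = c (chain c x β) x}

theorem chain_eq (x : X) (α : Ordinal.{u}) :
    chain c x α = if hS : (Sset c x α).Nonempty then wfX.min _ hS else x := by
  rw [chain, Ordinal.lt_wf.fix_eq]
  rfl

theorem mem_sset_self {x : X} {α : Ordinal.{u}}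
    (hx : ∀ β < α, chain c x β ≠ x) : x ∈ Sset c x α :=
  fun β hβ => ⟨hx β hβ, rfl⟩

theorem chain_eq_min {x : X} {α : Ordinal.{u}} (hS : (Sset c x α).Nonempty) :
    chain c x α = wfX.min _ hS := by
  rw [chain_eq, dif_pos hS]

theorem chain_mem {x : X} {α : Ordinal.{u}}
    (hx : ∀ β < α, chain c x β ≠ x) : chain c x α ∈ Sset c x α := by
  have hS : (Sset c x α).Nonempty := ⟨x, mem_sset_self c hx⟩
  rw [chain_eq_min c hS]
  exact wfX.min_mem _ hS

theorem exists_fixed (x : X) : ∃ α : Ordinal.{u}, chain c x α = x := by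
  by_contra h
  push_neg at h
  have hmem : ∀ α, chain c x α ∈ Sset c x α := fun α => chain_mem c (fun β _ => h β)
  have hinj : ∀ β α : Ordinal.{u}, β < α → chain c x β ≠ chain c x α := by
    intro β α hβα
    exact fun he => ((hmem α) β hβα).1 he
  have hfinj : Function.Injective
      (fun b : ((Order.succ #X).ord).ToType => chain c x (tyin b)) := by
    intro a b hab
    rcases lt_trichotomy (tyin a) (tyin b) with hlt | heq | hlt
    · exact absurd hab (hinj _ _ hlt)
    · exact tyin_inj heq
    · exact absurd hab.symm (hinj _ _ hlt)
  have hle : #((Order.succ #X).ord).ToType ≤ #X := Cardinal.mk_le_of_injective hfinj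
  rw [mk_toType, Cardinal.card_ord] at hle
  exact (Order.lt_succ #X).not_ge hle

noncomputable def dlt (x : X) : Ordinal.{u} := sInf {α | chain c x α = x}

theorem chain_dlt (x : X) : chain c x (dlt c x) = x := csInf_mem (exists_fixed c x)

theorem chain_ne_of_lt_dlt {x : X} {β : Ordinal.{u}} (h : β < dlt c x) :
    chain c x β ≠ x := by
  intro he
  exact h.not_ge (csInf_le' (show β ∈ {α : Ordinal.{u} | chain c x α = x} from he))

theorem chain_mem' {x : X} {α : Ordinal.{u}} (hα : α ≤ dlt c x) :
    chain c x α ∈ Sset c x α :=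
  chain_mem c fun β hβ => chain_ne_of_lt_dlt c (hβ.trans_le hα)

theorem chain_inj' {x : X} {β α : Ordinal.{u}} (hβα : β < α) (hα : α ≤ dlt c x) :
    chain c x β ≠ chain c x α := ((chain_mem' c hα) β hβα).1

theorem chain_color {x : X} {β α : Ordinal.{u}} (hβα : β < α) (hα : α ≤ dlt c x) :
    c (chain c x β) (chain c x α) = c (chain c x β) x := ((chain_mem' c hα) β hβα).2

theorem chain_congr {x x' : X}
    (h2 : ∀ β, β < dlt c x → c (chain c x β) x = c (chain c x' β) x') :
    ∀ α, α ≤ dlt c x → α ≤ dlt c x' → chain c x α = chain c x' α := by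
  intro α
  induction α using Ordinal.induction with
  | h α IH =>
    intro hα hα'
    have hc : ∀ β, β < α → chain c x β = chain c x' β := fun β hβ =>
      IH β hβ (hβ.le.trans hα) (hβ.le.trans hα')
    have hSeq : Sset c x α = Sset c x' α := by
      ext y
      simp only [Sset, mem_setOf_eq]
      constructor
      · intro hy β hβ
        rw [← h2 β (hβ.trans_le hα), ← hc β hβ]
        exact hy β hβ
      · intro hy β hβ
        rw [h2 β (hβ.trans_le hα), hc β hβ]
        exact hy β hβ
    have hne : (Sset c x α).Nonempty :=
      ⟨x, mem_sset_self c fun β hβ => chain_ne_of_lt_dlt c (hβ.trans_le hα)⟩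
    have hne' : (Sset c x' α).Nonempty := hSeq ▸ hne
    rw [chain_eq_min c hne, chain_eq_min c hne']
    congr 1

theorem determinism {x x' : X} (h1 : dlt c x = dlt c x')
    (h2 : ∀ β, β < dlt c x → c (chain c x β) x = c (chain c x' β) x') : x = x' := by
  have h3 := chain_congr c h2 (dlt c x) le_rfl (h1 ▸ le_rfl)
  rw [chain_dlt] at h3
  rw [h1, chain_dlt] at h3
  exact h3

end ERtmp
namespace ERtmp
open Ordinal Classical
variable {X I : Type u} (c : X → X → I)

theorem count {κ : Cardinal.{u}} (hκ : ℵ₀ ≤ κ) (hI : #I ≤ κ)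
    (hd : ∀ x : X, dlt c x < (Order.succ κ).ord) : #X ≤ 2 ^ κ := by
  set o := (Order.succ κ).ord with ho
  let E : X → Set (o.ToType × I) := fun x =>
    {z | tyin z.1 < dlt c x ∧ z.2 = c (chain c x (tyin z.1)) x}
  have key : ∀ x x' : X, E x = E x' → ∀ β, β < dlt c x →
      β < dlt c x' ∧ c (chain c x β) x = c (chain c x' β) x' := by
    intro x x' hE β hβ
    have hβo : β < o := hβ.trans (hd x)
    have hz : (enm β hβo, c (chain c x β) x) ∈ E x := by
      refine ⟨?_, ?_⟩
      · rw [tyin_enm]; exact hβ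
      · rw [tyin_enm]
    rw [hE] at hz
    obtain ⟨h1, h2⟩ := hz
    rw [tyin_enm] at h1 h2
    exact ⟨h1, h2⟩
  have hEinj : Function.Injective E := by
    intro x x' hE
    have hle : ∀ y y' : X, E y = E y' → dlt c y ≤ dlt c y' := by
      intro y y' hE'
      by_contra hlt
      push_neg at hlt
      exact absurd (key y y' hE' _ hlt).1 (lt_irrefl _)
    exact determinism c (le_antisymm (hle x x' hE) (hle x' x hE.symm))
      (fun β hβ => (key x x' hE β hβ).2)
  have hbd : ∀ x, #(E x) ≤ κ := by
    intro x
    have hg : Function.Injective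
        (fun z : E x => enm (tyin z.1.1) z.2.1) := by
      intro z z' hzz
      have h1 : tyin z.1.1 = tyin z'.1.1 := by
        have := congrArg tyin hzz
        rwa [tyin_enm, tyin_enm] at this
      have h2 : z.1.1 = z'.1.1 := tyin_inj h1
      apply Subtype.ext
      apply Prod.ext h2
      rw [z.2.2, z'.2.2, h2]
    have := Cardinal.mk_le_of_injective hg
    rw [mk_toType] at this
    refine this.trans ?_
    have := Cardinal.lt_ord.mp (hd x)
    exact Order.lt_succ_iff.mp this
  have h1 : #X ≤ #{s : Set (o.ToType × I) // #s ≤ κ} :=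
    mk_le_of_injective (f := fun x => (⟨E x, hbd x⟩ : {s : Set (o.ToType × I) // #s ≤ κ}))
      (fun x x' h => hEinj (congrArg Subtype.val h))
  have h2 : #{s : Set (o.ToType × I) // #s ≤ κ} ≤ max #(o.ToType × I) ℵ₀ ^ κ :=
    mk_bounded_set_le _ _
  have hZ : #(o.ToType × I) ≤ 2 ^ κ := by
    have : #(o.ToType × I) = #o.ToType * #I := by
      rw [mk_prod, Cardinal.lift_id, Cardinal.lift_id]
    rw [this, mk_toType, ho, Cardinal.card_ord]
    calc Order.succ κ * #I ≤ 2 ^ κ * 2 ^ κ :=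
          mul_le_mul' (Order.succ_le_of_lt (cantor κ)) (hI.trans (cantor κ).le)
      _ = 2 ^ (κ + κ) := (power_add 2 κ κ).symm
      _ = 2 ^ κ := by rw [add_eq_self hκ]
  have hmax : max #(o.ToType × I) ℵ₀ ≤ 2 ^ κ := max_le hZ (hκ.trans (cantor κ).le)
  calc #X ≤ max #(o.ToType × I) ℵ₀ ^ κ := h1.trans h2
    _ ≤ (2 ^ κ) ^ κ := power_le_power_right hmax
    _ = 2 ^ (κ * κ) := (power_mul).symm
    _ = 2 ^ κ := by rw [mul_eq_self hκ]

theorem erdosRado {κ : Cardinal.{u}} (hκ : ℵ₀ ≤ κ) {X I : Type u} (hI : #I ≤ κ)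
    (hX : 2 ^ κ < #X) (c : X → X → I) :
    ∃ (i : I) (T : Type u) (_ : LinearOrder T) (f : T ↪ X),
      κ < #T ∧ ∀ a b : T, a < b → c (f a) (f b) = i := by
  by_cases hd : ∀ x : X, dlt c x < (Order.succ κ).ord
  · exact absurd (count c hκ hI hd) hX.not_ge
  push_neg at hd
  obtain ⟨x, hx⟩ := hd
  set o := (Order.succ κ).ord with ho
  have hoκ : #o.ToType = Order.succ κ := by rw [mk_toType, ho, Cardinal.card_ord]
  set q : o.ToType → X := fun b => chain c x (tyin b) with hq
  have hqinj : Function.Injective q := by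
    intro a b hab
    rcases lt_trichotomy (tyin a) (tyin b) with hlt | heq | hlt
    · exact absurd hab (chain_inj' c hlt ((tyin_lt b).le.trans hx))
    · exact tyin_inj heq
    · exact absurd hab.symm (chain_inj' c hlt ((tyin_lt a).le.trans hx))
  set g : o.ToType → I := fun b => c (q b) x with hgdef
  have hfib : ∃ i : I, κ < #{b : o.ToType // g b = i} := by
    by_contra hcon
    push_neg at hcon
    have hle : #o.ToType ≤ κ := by
      have e : #o.ToType = #(Σ i : I, {b : o.ToType // g b = i}) :=
        mk_congr (Equiv.sigmaFiberEquiv g).symm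
      rw [e, mk_sigma]
      calc (Cardinal.sum fun i : I => #{b : o.ToType // g b = i})
          ≤ Cardinal.sum fun _ : I => κ := sum_le_sum _ _ fun i => hcon i
        _ = #I * κ := sum_const' _ _
        _ ≤ κ * κ := mul_le_mul' hI le_rfl
        _ = κ := mul_eq_self hκ
    rw [hoκ] at hle
    exact (Order.lt_succ κ).not_ge hle
  obtain ⟨i, hi⟩ := hfib
  refine ⟨i, {b : o.ToType // g b = i}, inferInstance,
    ⟨fun b => q b.1, fun a b hab => Subtype.ext (hqinj hab)⟩, hi, ?_⟩
  intro a b hab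
  have h1 : tyin a.1 < tyin b.1 := tyin_lt_tyin.mpr (Subtype.coe_lt_coe.mpr hab)
  have h2 := chain_color c h1 ((tyin_lt b.1).le.trans hx)
  exact h2.trans a.2

end ERtmp


section TOP
variable [TopologicalSpace X] {k : ℕ}

theorem chain_mem_of_lt {x : X} {V : ℕ → Set X} (hx : x ∈ V 0)
    (hch : ∀ i, i + 1 < k → closure (V i) ⊆ V (i+1)) :
    ∀ i, i < k → x ∈ V i := by
  intro i
  induction i with
  | zero => intro _; exact hx
  | succ n IH => intro hn; exact hch n hn (subset_closure (IH (by omega)))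

theorem soddnhd_mono {x : X} {U U' : Set X} (h : SOddNhd k x U) (hUU' : U ⊆ U') :
    SOddNhd k x U' := by
  obtain ⟨V, h1, h2, h3, h4⟩ := h
  exact ⟨V, h1, h2, h3, h4.trans hUU'⟩

theorem soddnhd_inter {x : X} {U U' : Set X} (h : SOddNhd k x U) (h' : SOddNhd k x U') :
    SOddNhd k x (U ∩ U') := by
  obtain ⟨V, h1, h2, h3, h4⟩ := h
  obtain ⟨V', h1', h2', h3', h4'⟩ := h'
  refine ⟨fun i => V i ∩ V' i, fun i hi => (h1 i hi).inter (h1' i hi), ⟨h2, h2'⟩,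
    fun i hi => ?_, inter_subset_inter h4 h4'⟩
  refine subset_trans ?_ (inter_subset_inter (h3 i hi) (h3' i hi))
  exact subset_trans (closure_mono (by exact inter_subset_inter Subset.rfl Subset.rfl))
    (subset_inter (closure_mono inter_subset_left) (closure_mono inter_subset_right))

theorem soddnhd_exists_open (hk : 1 ≤ k) {x : X} {U : Set X} (h : SOddNhd k x U) :
    ∃ O, IsOpen O ∧ x ∈ O ∧ O ⊆ U ∧ SOddNhd k x O := by
  obtain ⟨V, h1, h2, h3, h4⟩ := h
  exact ⟨V (k-1), h1 _ (by omega), chain_mem_of_lt h2 h3 _ (by omega), h4,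
    ⟨V, h1, h2, h3, Subset.rfl⟩⟩

theorem sspace_sep (hk : 1 ≤ k) (hS : SSpace (2*k) X) {x y : X} (hxy : x ≠ y) :
    ∃ A A' : Set X, SOpenNhd k x A ∧ SOpenNhd k y A' ∧ closure A ∩ closure A' = ∅ := by
  have hs := hS x y hxy
  have h2k : 2*k = (2*k-1)+1 := by omega
  rw [h2k] at hs
  obtain ⟨U, hop, hx0, hch, hlast⟩ := hs
  set m := 2*k - 1 with hm
  have hym : y ∉ closure (U m) := by
    intro hy
    have : y ∈ closure (U m) ∩ {y} := ⟨hy, rfl⟩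
    rw [hlast] at this
    exact this
  refine ⟨U (k-1), (closure (U k))ᶜ, ⟨hop _ (by omega), U, fun i hi => hop i (by omega),
    hx0, fun i hi => hch i (by omega), Subset.rfl⟩, ⟨isClosed_closure.isOpen_compl, ?_⟩, ?_⟩
  · -- SOddNhd k y (closure (U k))ᶜ
    refine ⟨fun i => (closure (U (m - i)))ᶜ, fun i hi => (isClosed_closure).isOpen_compl,
      ?_, fun i hi => ?_, ?_⟩
    · simpa using hym
    · have hstep1 : closure ((closure (U (m - i)))ᶜ) ⊆ (U (m - i))ᶜ :=
        closure_minimal (compl_subset_compl.mpr subset_closure)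
          (hop _ (by omega)).isClosed_compl
      refine hstep1.trans (compl_subset_compl.mpr ?_)
      have h5 : m - (i+1) + 1 = m - i := by omega
      have := hch (m - (i+1)) (by omega)
      rwa [h5] at this
    · have h6 : m - (k-1) = k := by omega
      show (closure (U (m - (k-1))))ᶜ ⊆ (closure (U k))ᶜ
      rw [h6]
  · apply eq_empty_of_subset_empty
    rintro z ⟨hz1, hz2⟩
    have hz1' : z ∈ U k := by
      have h7 := hch (k-1) (by omega) hz1
      have h8 : k - 1 + 1 = k := by omega
      rwa [h8] at h7
    have hz2' : z ∈ (U k)ᶜ :=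
      closure_minimal (compl_subset_compl.mpr subset_closure)
        (hop k (by omega)).isClosed_compl hz2
    exact hz2' hz1'

end TOP


section MAIN
open ERtmp

theorem stmt7 (k : ℕ) (hk : 1 ≤ k) (X : Type u) [TopologicalSpace X]
    (h : SSpace (2 * k) X) :
    #X ≤ 2 ^ (cellEven k X * charEven k X) := by
  classical
  set μ := charEven k X with hμdef
  set κ := cellEven k X * charEven k X with hκdef
  -- charEven is realized
  have hne : {c | Cardinal.aleph0 ≤ c ∧ ∀ x : X, ∃ B : Set (Set X), #B ≤ c ∧
      (∀ V ∈ B, IsClosed V ∧ SOddNhd k x V) ∧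
      ∀ W : Set X, SOpenNhd k x W → ∃ V ∈ B, V ⊆ closure W}.Nonempty := by
    refine ⟨max ℵ₀ #(Set X), le_max_left _ _, fun x => ⟨{V | IsClosed V ∧ SOddNhd k x V},
      (mk_set_le _).trans (le_max_right _ _), fun V hV => hV, fun W hW =>
      ⟨closure W, ⟨isClosed_closure, soddnhd_mono hW.2 subset_closure⟩, Subset.rfl⟩⟩⟩
  have hmem : μ ∈ {c | Cardinal.aleph0 ≤ c ∧ ∀ x : X, ∃ B : Set (Set X), #B ≤ c ∧
      (∀ V ∈ B, IsClosed V ∧ SOddNhd k x V) ∧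
      ∀ W : Set X, SOpenNhd k x W → ∃ V ∈ B, V ⊆ closure W} := csInf_mem hne
  obtain ⟨hμinf, hbasis⟩ := hmem
  choose B hB1 hB2 hB3 using hbasis
  have hcellinf : ℵ₀ ≤ cellEven k X := by
    unfold cellEven; exact le_sup_right
  have hμκ : μ ≤ κ := Cardinal.le_mul_left (a := μ) (aleph0_pos.trans_le hcellinf).ne'
  have hcκ : cellEven k X ≤ κ := Cardinal.le_mul_right (aleph0_pos.trans_le hμinf).ne'
  have hκinf : ℵ₀ ≤ κ := hμinf.trans hμκ
  by_contra hcon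
  rw [not_le] at hcon
  -- index type
  set I0 := μ.out with hI0def
  have hI0 : #I0 = μ := mk_out μ
  haveI : Nonempty I0 := by
    rw [← Cardinal.mk_ne_zero_iff, hI0]
    exact (aleph0_pos.trans_le hμinf).ne'
  have hemb : ∀ x : X, Nonempty (↥(B x) ↪ I0) := fun x =>
    (Cardinal.le_def _ _).mp (by rw [hI0]; exact hB1 x)
  let ι : ∀ x : X, ↥(B x) ↪ I0 := fun x => (hemb x).some
  -- pair separation
  have hpair : ∀ x y : X, x ≠ y → ∃ V, V ∈ B x ∧ ∃ W, W ∈ B y ∧ V ∩ W = ∅ := by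
    intro x y hxy
    obtain ⟨A, A', hA, hA', hdisj⟩ := sspace_sep hk h hxy
    obtain ⟨V, hV, hVsub⟩ := hB3 x A hA
    obtain ⟨W, hW, hWsub⟩ := hB3 y A' hA'
    refine ⟨V, hV, W, hW, eq_empty_of_subset_empty ?_⟩
    rintro z ⟨hz1, hz2⟩
    have : z ∈ closure A ∩ closure A' := ⟨hVsub hz1, hWsub hz2⟩
    rw [hdisj] at this
    exact this
  choose! Vp hVpB Wp hWpB hVW using hpair
  have hI : #(I0 × I0) ≤ κ := by
    have e : #(I0 × I0) = μ * μ := by simp [hI0]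
    rw [e, mul_eq_self hμinf]
    exact hμκ
  obtain ⟨i, T, instT, f, hTκ, hhom⟩ := ERtmp.erdosRado hκinf hI hcon
    (fun x y => if hxy : x ≠ y then
      (ι x ⟨Vp x y, hVpB x y hxy⟩, ι y ⟨Wp x y, hWpB x y hxy⟩)
     else Classical.arbitrary (I0 × I0))
  letI := instT
  have hfne : ∀ s t : T, s < t → f s ≠ f t := fun s t hst he => (ne_of_lt hst) (f.injective he)
  have hcol : ∀ s t : T, (hst : s < t) →
      ι (f s) ⟨Vp (f s) (f t), hVpB _ _ (hfne s t hst)⟩ = i.1 ∧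
      ι (f t) ⟨Wp (f s) (f t), hWpB _ _ (hfne s t hst)⟩ = i.2 := by
    intro s t hst
    have h1 := hhom s t hst
    rw [dif_pos (hfne s t hst)] at h1
    exact ⟨congrArg Prod.fst h1, congrArg Prod.snd h1⟩
  have hVconst : ∀ s t t' : T, (h1 : s < t) → (h2 : s < t') →
      Vp (f s) (f t) = Vp (f s) (f t') := by
    intro s t t' h1 h2
    have e := ((hcol s t h1).1).trans ((hcol s t' h2).1).symm
    exact congrArg Subtype.val ((ι (f s)).injective e)
  have hWconst : ∀ s s' t : T, (h1 : s < t) → (h2 : s' < t) →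
      Wp (f s) (f t) = Wp (f s') (f t) := by
    intro s s' t h1 h2
    have e := ((hcol s t h1).2).trans ((hcol s' t h2).2).symm
    exact congrArg Subtype.val ((ι (f t)).injective e)
  set T' : Set T := {t | (∃ a, a < t) ∧ (∃ b, t < b)} with hT'def
  -- κ < #T'
  have hT' : κ < #(↥T') := by
    by_contra hle
    rw [not_lt] at hle
    have hsub : T'ᶜ ⊆ {t : T | ¬∃ a, a < t} ∪ {t : T | ¬∃ b, t < b} := by
      intro t ht
      exact not_and_or.mp ht
    have hs1 : {t : T | ¬∃ a, a < t}.Subsingleton := by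
      intro t ht t' ht'
      by_contra hne
      rcases lt_or_gt_of_ne hne with hlt | hlt
      · exact ht' ⟨t, hlt⟩
      · exact ht ⟨t', hlt⟩
    have hs2 : {t : T | ¬∃ b, t < b}.Subsingleton := by
      intro t ht t' ht'
      by_contra hne
      rcases lt_or_gt_of_ne hne with hlt | hlt
      · exact ht ⟨t', hlt⟩
      · exact ht' ⟨t, hlt⟩
    have hc2 : #(↥(T'ᶜ)) ≤ 2 := by
      calc #(↥(T'ᶜ)) ≤ #(↥({t : T | ¬∃ a, a < t} ∪ {t : T | ¬∃ b, t < b})) :=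
            mk_le_mk_of_subset hsub
        _ ≤ #({t : T | ¬∃ a, a < t}) + #({t : T | ¬∃ b, t < b}) := mk_union_le _ _
        _ ≤ 1 + 1 := add_le_add (mk_le_one_iff_set_subsingleton.mpr hs1)
            (mk_le_one_iff_set_subsingleton.mpr hs2)
        _ = 2 := one_add_one_eq_two
    have h2κ : (2 : Cardinal) ≤ κ := by
      refine le_trans ?_ hκinf
      exact_mod_cast (nat_lt_aleph0 2).le
    have hTle : #T ≤ κ := by
      rw [← mk_sum_compl T']
      calc #(↥T') + #(↥(T'ᶜ)) ≤ κ + 2 := add_le_add hle hc2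
        _ ≤ κ + κ := add_le_add le_rfl h2κ
        _ = κ := add_eq_self hκinf
    exact (hTκ.trans_le hTle).false
  -- selected basis sets
  set Vt : ↥T' → Set X := fun t => Vp (f t.1) (f (t.2.2.choose)) with hVtdef
  set Wt : ↥T' → Set X := fun t => Wp (f (t.2.1.choose)) (f t.1) with hWtdef
  have hVtB : ∀ t : ↥T', Vt t ∈ B (f t.1) := fun t =>
    hVpB _ _ (hfne _ _ t.2.2.choose_spec)
  have hWtB : ∀ t : ↥T', Wt t ∈ B (f t.1) := fun t =>
    hWpB _ _ (hfne _ _ t.2.1.choose_spec)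
  have hdisjVW : ∀ s t : ↥T', s.1 < t.1 → Vt s ∩ Wt t = ∅ := by
    intro s t hst
    have e1 : Vt s = Vp (f s.1) (f t.1) := hVconst s.1 _ t.1 s.2.2.choose_spec hst
    have e2 : Wt t = Wp (f s.1) (f t.1) := (hWconst s.1 _ t.1 hst t.2.1.choose_spec).symm
    rw [e1, e2]
    exact hVW _ _ (hfne _ _ hst)
  -- open cores
  have hO : ∀ t : ↥T', ∃ O, IsOpen O ∧ f t.1 ∈ O ∧ O ⊆ Vt t ∧ SOddNhd k (f t.1) O :=
    fun t => soddnhd_exists_open hk (hB2 (f t.1) _ (hVtB t)).2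
  have hP : ∀ t : ↥T', ∃ P, IsOpen P ∧ f t.1 ∈ P ∧ P ⊆ Wt t ∧ SOddNhd k (f t.1) P :=
    fun t => soddnhd_exists_open hk (hB2 (f t.1) _ (hWtB t)).2
  choose O hOopen hOmem hOsub hOodd using hO
  choose P hPopen hPmem hPsub hPodd using hP
  set G : ↥T' → Set X := fun t => O t ∩ P t with hGdef
  have hGmem : ∀ t : ↥T', f t.1 ∈ G t := fun t => ⟨hOmem t, hPmem t⟩
  have hGopen : ∀ t : ↥T', IsOpen (G t) := fun t => (hOopen t).inter (hPopen t)
  have hGodd : ∀ t : ↥T', SOddNhd k (f t.1) (G t) := fun t =>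
    soddnhd_inter (hOodd t) (hPodd t)
  have hGclV : ∀ t : ↥T', closure (G t) ⊆ Vt t := fun t =>
    (closure_mono inter_subset_left).trans
      (closure_minimal (hOsub t) (hB2 (f t.1) _ (hVtB t)).1)
  have hGclW : ∀ t : ↥T', closure (G t) ⊆ Wt t := fun t =>
    (closure_mono inter_subset_right).trans
      (closure_minimal (hPsub t) (hB2 (f t.1) _ (hWtB t)).1)
  have hGdisj : ∀ s t : ↥T', s.1 < t.1 → closure (G s) ∩ closure (G t) = ∅ := by
    intro s t hst
    refine eq_empty_of_subset_empty ?_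
    rintro z ⟨hz1, hz2⟩
    have : z ∈ Vt s ∩ Wt t := ⟨hGclV s hz1, hGclW t hz2⟩
    rw [hdisjVW s t hst] at this
    exact this
  have hGne : ∀ s t : ↥T', s ≠ t → G s ≠ G t := by
    intro s t hst he
    have hst' : s.1 ≠ t.1 := fun hv => hst (Subtype.ext hv)
    rcases lt_or_gt_of_ne hst' with hlt | hlt
    · have : f s.1 ∈ closure (G s) ∩ closure (G t) :=
        ⟨subset_closure (hGmem s), he ▸ subset_closure (hGmem s)⟩
      rw [hGdisj s t hlt] at this
      exact this
    · have : f t.1 ∈ closure (G t) ∩ closure (G s) :=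
        ⟨subset_closure (hGmem t), he ▸ subset_closure (hGmem t)⟩
      rw [hGdisj t s hlt] at this
      exact this
  have hGinj : Function.Injective G := by
    intro s t he
    by_contra hst
    exact hGne s t hst he
  set F : Set (Set X) := Set.range G with hFdef
  have hF1 : ∀ U ∈ F, SOpen k U ∧ U.Nonempty := by
    rintro U ⟨t, rfl⟩
    exact ⟨⟨hGopen t, f t.1, hGodd t⟩, ⟨f t.1, hGmem t⟩⟩
  have hF2 : ∀ U ∈ F, ∀ V ∈ F, U ≠ V → closure U ∩ closure V = ∅ := by
    rintro U ⟨s, rfl⟩ V ⟨t, rfl⟩ hUV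
    have hst : s ≠ t := fun he => hUV (congrArg G he)
    rcases lt_or_gt_of_ne hst with hlt | hlt
    · exact hGdisj s t hlt
    · rw [inter_comm]
      exact hGdisj t s hlt
  have hFκ : κ < #(↥F) := by
    rw [hFdef, mk_range_eq G hGinj]
    exact hT'
  have hFcell : #(↥F) ≤ cellEven k X := by
    have hle : #(↥F) ≤ ⨆ F' : {F' : Set (Set X) // (∀ U ∈ F', SOpen k U ∧ U.Nonempty) ∧
        (∀ U ∈ F', ∀ V ∈ F', U ≠ V → closure U ∩ closure V = ∅)}, #F'.1 :=
      le_ciSup (Cardinal.bddAbove_range _)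
        (⟨F, hF1, hF2⟩ : {F' : Set (Set X) // (∀ U ∈ F', SOpen k U ∧ U.Nonempty) ∧
          (∀ U ∈ F', ∀ V ∈ F', U ≠ V → closure U ∩ closure V = ∅)})
    refine hle.trans ?_
    unfold cellEven
    exact le_sup_left
  exact ((hFκ.trans_le hFcell).trans_le hcκ).false

end MAIN
end

section
/- If X is a Urysohn space, then |X| ≤ 2^{Uc(X)·k(X)}, where Uc(X) is the Urysohn cellularity and k(X) is the κ-character of X. -/
open Cardinal Set

universe u

variable {X : Type u}

/-- The κ-character `k(X)`. -/
noncomputable def kChar (X : Type u) [TopologicalSpace X] : Cardinal :=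
  sInf {c | Cardinal.aleph0 ≤ c ∧ ∀ x : X, ∃ B : Set (Set X), #B ≤ c ∧
    (∀ V ∈ B, IsClosed V ∧ V ∈ nhds x) ∧
    ∀ W ∈ nhds x, ∃ V ∈ B, V ⊆ closure W}

namespace Stmt8Aux

theorem exists_range_eq {α ι : Type u} {S : Set α} (hne : S.Nonempty) (hle : #S ≤ #ι) :
    ∃ f : ι → α, range f = S := by
  haveI hS : Nonempty ↥S := hne.to_subtype
  obtain ⟨emb⟩ := Cardinal.le_def _ _ |>.1 hle
  refine ⟨fun i => Subtype.val (Function.invFun (⇑emb) i), ?_⟩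
  ext a
  constructor
  · rintro ⟨i, rfl⟩
    exact (Function.invFun (⇑emb) i).2
  · intro ha
    refine ⟨emb ⟨a, ha⟩, ?_⟩
    show Subtype.val (Function.invFun (⇑emb) (emb ⟨a, ha⟩)) = a
    rw [Function.leftInverse_invFun emb.injective ⟨a, ha⟩]

variable {X : Type u} [TopologicalSpace X]

theorem card_le_cellEven {D : Set (Set X)}
    (h1 : ∀ a ∈ D, IsClosed a ∧ (interior a).Nonempty)
    (h2 : ∀ a ∈ D, ∀ b ∈ D, a ≠ b → a ∩ b = ∅) : #D ≤ cellEven 1 X := by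
  have hinj : InjOn interior D := by
    intro a ha b hb hab
    by_contra hne
    obtain ⟨x, hx⟩ := (h1 a ha).2
    have hx' : x ∈ a ∩ b := ⟨interior_subset hx, interior_subset (hab ▸ hx)⟩
    rw [h2 a ha b hb hne] at hx'
    exact hx'
  have hprop1 : ∀ U' ∈ interior '' D, SOpen 1 U' ∧ U'.Nonempty := by
    rintro _ ⟨a, ha, rfl⟩
    obtain ⟨x, hx⟩ := (h1 a ha).2
    exact ⟨⟨isOpen_interior, x, fun _ => interior a, fun i _ => isOpen_interior, hx,
      fun i hi => absurd hi (by omega), subset_rfl⟩, ⟨x, hx⟩⟩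
  have hprop2 : ∀ U' ∈ interior '' D, ∀ V' ∈ interior '' D, U' ≠ V' →
      closure U' ∩ closure V' = ∅ := by
    rintro _ ⟨a, ha, rfl⟩ _ ⟨b, hb, rfl⟩ hne
    have hab : a ≠ b := fun h => hne (h ▸ rfl)
    apply eq_empty_iff_forall_notMem.2
    rintro x ⟨hx1, hx2⟩
    have hxa : x ∈ a := closure_minimal interior_subset (h1 a ha).1 hx1
    have hxb : x ∈ b := closure_minimal interior_subset (h1 b hb).1 hx2
    have : x ∈ a ∩ b := ⟨hxa, hxb⟩
    rw [h2 a ha b hb hab] at this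
    exact this
  have key : #D = #(interior '' D) := (mk_image_eq_of_injOn _ _ hinj).symm
  rw [key]
  refine le_trans ?_ (le_sup_left : _ ≤ cellEven 1 X)
  exact le_ciSup (Cardinal.bddAbove_range _)
    (⟨interior '' D, hprop1, hprop2⟩ : {F : Set (Set X) // (∀ U ∈ F, SOpen 1 U ∧ U.Nonempty) ∧
      (∀ U ∈ F, ∀ V ∈ F, U ≠ V → closure U ∩ closure V = ∅)})

theorem kChar_mem :
    ℵ₀ ≤ kChar X ∧ ∀ x : X, ∃ B : Set (Set X), #B ≤ kChar X ∧
      (∀ V ∈ B, IsClosed V ∧ V ∈ nhds x) ∧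
      ∀ W ∈ nhds x, ∃ V ∈ B, V ⊆ closure W := by
  have : kChar X ∈ {c | Cardinal.aleph0 ≤ c ∧ ∀ x : X, ∃ B : Set (Set X), #B ≤ c ∧
      (∀ V ∈ B, IsClosed V ∧ V ∈ nhds x) ∧
      ∀ W ∈ nhds x, ∃ V ∈ B, V ⊆ closure W} := by
    apply csInf_mem
    refine ⟨max ℵ₀ (2 ^ #X), le_max_left _ _, fun x =>
      ⟨{v | IsClosed v ∧ v ∈ nhds x}, ?_, fun v hv => hv,
        fun W hW => ⟨closure W, ⟨isClosed_closure, Filter.mem_of_superset hW subset_closure⟩,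
          subset_rfl⟩⟩⟩
    refine le_trans (mk_set_le _) ?_
    rw [mk_set]
    exact le_max_right _ _
  exact this

/-- The trap set of the `i`-th family coded by `P`. -/
def trap {ι : Type u} (P : ι → ι → Set X) (i : ι) : Set X :=
  {p | ∀ O : Set X, IsOpen O → p ∈ O → ∃ j, (closure O ∩ P i j).Nonempty}

/-- The escape set of a system `P`. -/
def escp {ι : Type u} (P : ι → ι → Set X) : Set X := (⋃ i, trap P i)ᶜ

open Classical in
noncomputable def pick [Nonempty X] {ι : Type u} (P : ι → ι → Set X) : X :=
  if h : (escp P).Nonempty then h.choose else Classical.arbitrary X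

theorem pick_mem [Nonempty X] {ι : Type u} {P : ι → ι → Set X} (h : (escp P).Nonempty) :
    pick P ∈ escp P := by
  rw [pick]
  rw [dif_pos h]
  exact h.choose_spec

/-- `P` is a system whose members come from the catalog over `A`. -/
def goodP {ι : Type u} (V : X → Set (Set X)) (A : Set X) (P : ι → ι → Set X) : Prop :=
  ∀ i j, P i j = ∅ ∨ ∃ x ∈ A, P i j ∈ V x

theorem goodP_mono {ι : Type u} {V : X → Set (Set X)} {A B : Set X} (hAB : A ⊆ B)
    {P : ι → ι → Set X} (h : goodP V A P) : goodP V B P := by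
  intro i j
  rcases h i j with h0 | ⟨x, hx, hV⟩
  · exact Or.inl h0
  · exact Or.inr ⟨x, hAB hx, hV⟩

/-- One step of the closing-off operator. -/
def Fop [Nonempty X] (ι : Type u) (V : X → Set (Set X)) (A : Set X) : Set X :=
  A ∪ {x | ∃ P : ι → ι → Set X, goodP V A P ∧ (escp P).Nonempty ∧ x = pick P}

theorem subset_Fop [Nonempty X] (ι : Type u) (V : X → Set (Set X)) (A : Set X) :
    A ⊆ Fop ι V A := subset_union_left

theorem pick_mem_Fop [Nonempty X] {ι : Type u} {V : X → Set (Set X)} {A : Set X}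
    {P : ι → ι → Set X} (h1 : goodP V A P) (h2 : (escp P).Nonempty) :
    pick P ∈ Fop ι V A := Or.inr ⟨P, h1, h2, rfl⟩

theorem mk_Fop_le [Nonempty X] {κ : Cardinal.{u}} (hκ : ℵ₀ ≤ κ) {ι : Type u} (hι : #ι ≤ κ)
    {V : X → Set (Set X)} (hV : ∀ x, #(V x) ≤ κ) {A : Set X} (hA : #A ≤ 2 ^ κ) :
    #(Fop ι V A) ≤ 2 ^ κ := by
  have h2 : ℵ₀ ≤ 2 ^ κ := hκ.trans (cantor κ).le
  set W : Set (Set X) := insert ∅ (⋃ x ∈ A, V x) with hW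
  have hWcard : #W ≤ 2 ^ κ := by
    have h1 : #(⋃ x ∈ A, V x) ≤ #A * κ := by
      refine (mk_biUnion_le V A).trans ?_
      exact mul_le_mul_right (ciSup_le' fun x => hV _) _
    refine le_trans mk_insert_le (Cardinal.add_le_of_le h2 ?_ (le_trans ?_ h2))
    · refine h1.trans ?_
      calc #A * κ ≤ (2 ^ κ) * (2 ^ κ) :=
            mul_le_mul' hA ((cantor κ).le)
        _ = 2 ^ κ := Cardinal.mul_eq_self h2
    · exact_mod_cast Cardinal.one_le_aleph0
  have hTW : #{P : ι → ι → Set X | goodP V A P} ≤ #(ι → ι → ↥W) := by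
    refine mk_le_of_injective (f := fun P : {P : ι → ι → Set X // goodP V A P} =>
      fun i j => (⟨P.1 i j, ?_⟩ : ↥W)) ?_
    · rcases P.2 i j with h0 | ⟨x, hx, hVx⟩
      · rw [h0]; exact mem_insert _ _
      · exact mem_insert_of_mem _ (mem_biUnion hx hVx)
    · intro P Q hPQ
      apply Subtype.ext
      funext i j
      have := congrFun (congrFun hPQ i) j
      exact congrArg Subtype.val this
  have harrow : #(ι → ι → ↥W) ≤ 2 ^ κ := by
    have e1 : #(ι → ι → ↥W) = (#(↥W) ^ #ι) ^ #ι := by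
      rw [Cardinal.power_def, Cardinal.power_def]
    rw [e1, ← Cardinal.power_mul]
    calc #(↥W) ^ (#ι * #ι) ≤ (2 ^ κ) ^ (#ι * #ι) := power_le_power_right hWcard
      _ ≤ (2 ^ κ) ^ (κ * κ) := by
          refine power_le_power_left (power_ne_zero _ two_ne_zero) (mul_le_mul' hι hι)
      _ = 2 ^ (κ * (κ * κ)) := by rw [← Cardinal.power_mul]
      _ = 2 ^ κ := by rw [Cardinal.mul_eq_self hκ, Cardinal.mul_eq_self hκ]
  have hpic : #{x | ∃ P : ι → ι → Set X, goodP V A P ∧ (escp P).Nonempty ∧ x = pick P} ≤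
      #{P : ι → ι → Set X | goodP V A P} := by
    have hsub : {x | ∃ P : ι → ι → Set X, goodP V A P ∧ (escp P).Nonempty ∧ x = pick P} ⊆
        pick '' {P : ι → ι → Set X | goodP V A P} := by
      rintro x ⟨P, h1, h2', rfl⟩
      exact ⟨P, h1, rfl⟩
    exact le_trans (mk_le_mk_of_subset hsub) mk_image_le
  exact le_trans (mk_union_le _ _)
    (Cardinal.add_le_of_le h2 hA (le_trans hpic (le_trans hTW harrow)))

noncomputable def gseq [Nonempty X] (ι : Type u) (V : X → Set (Set X))
    (ϑ : Type u) [LinearOrder ϑ] [WellFoundedLT ϑ] : ϑ → Set X :=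
  (wellFounded_lt).fix fun t ih => Fop ι V (⋃ s : {s : ϑ // s < t}, ih s.1 s.2)

theorem gseq_eq [Nonempty X] (ι : Type u) (V : X → Set (Set X))
    (ϑ : Type u) [LinearOrder ϑ] [WellFoundedLT ϑ] (t : ϑ) :
    gseq ι V ϑ t = Fop ι V (⋃ s : {s : ϑ // s < t}, gseq ι V ϑ s.1) :=
  WellFounded.fix_eq _ _ _

theorem gseq_mono [Nonempty X] (ι : Type u) (V : X → Set (Set X))
    (ϑ : Type u) [LinearOrder ϑ] [WellFoundedLT ϑ] {s t : ϑ} (hst : s < t) :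
    gseq ι V ϑ s ⊆ gseq ι V ϑ t := by
  rw [gseq_eq ι V ϑ t]
  exact le_trans (subset_iUnion (fun s : {s : ϑ // s < t} => gseq ι V ϑ s.1) ⟨s, hst⟩)
    (subset_Fop _ _ _)

theorem mk_gseq_le [Nonempty X] {κ : Cardinal.{u}} (hκ : ℵ₀ ≤ κ) {ι : Type u} (hι : #ι ≤ κ)
    {V : X → Set (Set X)} (hV : ∀ x, #(V x) ≤ κ) (ϑ : Type u) [LinearOrder ϑ] [WellFoundedLT ϑ]
    (hϑ : #ϑ ≤ 2 ^ κ) (t : ϑ) : #(gseq ι V ϑ t) ≤ 2 ^ κ := by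
  have h2 : ℵ₀ ≤ 2 ^ κ := hκ.trans (cantor κ).le
  refine WellFounded.induction (C := fun t : ϑ => #(gseq ι V ϑ t) ≤ 2 ^ κ)
    (wellFounded_lt (α := ϑ)) t ?_
  intro t ih
  rw [gseq_eq]
  refine mk_Fop_le hκ hι hV ?_
  refine le_trans (mk_iUnion_le _) ?_
  have b1 : #{s : ϑ // s < t} ≤ 2 ^ κ := le_trans (mk_subtype_le _) hϑ
  have b2 : ⨆ s : {s : ϑ // s < t}, #(gseq ι V ϑ s.1) ≤ 2 ^ κ := ciSup_le' fun s => ih s.1 s.2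
  exact le_trans (mul_le_mul' b1 b2) (le_of_eq (Cardinal.mul_eq_self h2))

theorem gseq_closed [Nonempty X] {κ : Cardinal.{u}} (hκ : ℵ₀ ≤ κ) {ι : Type u} (hι : #ι ≤ κ)
    (V : X → Set (Set X)) {P : ι → ι → Set X}
    (hP : goodP V (⋃ t, gseq ι V ((Order.succ κ).ord).ToType t) P)
    (hne : (escp P).Nonempty) :
    pick P ∈ ⋃ t, gseq ι V ((Order.succ κ).ord).ToType t := by
  haveI hϑne : Nonempty (((Order.succ κ).ord).ToType) := by
    rw [Ordinal.nonempty_toType_iff]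
    intro h0
    have h1 : Order.succ κ = 0 := by rwa [Cardinal.ord_eq_zero] at h0
    have h2 : (0 : Cardinal) < Order.succ κ := lt_of_le_of_lt zero_le (Order.lt_succ κ)
    rw [h1] at h2
    exact lt_irrefl _ h2
  have hstage : ∀ i j, ∃ t, P i j = ∅ ∨
      ∃ x ∈ gseq ι V ((Order.succ κ).ord).ToType t, P i j ∈ V x := by
    intro i j
    rcases hP i j with h0 | ⟨x, hxH, hxV⟩
    · exact ⟨Classical.arbitrary _, Or.inl h0⟩
    · obtain ⟨t, ht⟩ := mem_iUnion.1 hxH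
      exact ⟨t, Or.inr ⟨x, ht, hxV⟩⟩
  choose t ht using hstage
  haveI : IsWellOrder (((Order.succ κ).ord).ToType) (· < ·) := isWellOrder_lt
  have hbdd : Set.Bounded (· < ·) (range fun pr : ι × ι => t pr.1 pr.2) := by
    refine not_isCofinal_iff.1 fun hcof => absurd (Ordinal.lt_cof_type hcof) (not_le.2 ?_)
    rw [Ordinal.cof_toType, (Cardinal.isRegular_succ hκ).cof_eq]
    refine lt_of_le_of_lt ?_ (Order.lt_succ κ)
    refine le_trans mk_range_le ?_
    simp only [Cardinal.mk_prod, Cardinal.lift_id]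
    exact le_trans (mul_le_mul' hι hι) (le_of_eq (Cardinal.mul_eq_self hκ))
  obtain ⟨t', ht'⟩ := hbdd
  have hPg : goodP V (⋃ s : {s // s < t'}, gseq ι V ((Order.succ κ).ord).ToType s.1) P := by
    intro i j
    rcases ht i j with h0 | ⟨x, hxg, hxV⟩
    · exact Or.inl h0
    · exact Or.inr ⟨x, mem_iUnion.2 ⟨⟨t i j, ht' _ (mem_range_self (i, j))⟩, hxg⟩, hxV⟩
  have hmem := pick_mem_Fop hPg hne
  rw [← gseq_eq] at hmem
  exact mem_iUnion.2 ⟨t', hmem⟩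

end Stmt8Aux

theorem stmt8 (X : Type u) [TopologicalSpace X]
    (h : ∀ x y : X, x ≠ y → ∃ U V : Set X, IsOpen U ∧ IsOpen V ∧ x ∈ U ∧ y ∈ V ∧
      closure U ∩ closure V = ∅) :
    #X ≤ 2 ^ (cellEven 1 X * kChar X) := by
  rcases isEmpty_or_nonempty X with hX | hX
  · exact le_trans (le_of_eq (Cardinal.mk_eq_zero X)) zero_le
  classical
  obtain ⟨hk0, hkfam⟩ := Stmt8Aux.kChar_mem (X := X)
  set κ : Cardinal.{u} := cellEven 1 X * kChar X with hκdef
  have hc0 : ℵ₀ ≤ cellEven 1 X := le_sup_right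
  have hcne : cellEven 1 X ≠ 0 := (lt_of_lt_of_le aleph0_pos hc0).ne'
  have hkne : kChar X ≠ 0 := (lt_of_lt_of_le aleph0_pos hk0).ne'
  have hkκ : kChar X ≤ κ := Cardinal.le_mul_left hcne
  have hcκ : cellEven 1 X ≤ κ := Cardinal.le_mul_right hkne
  have hκ : ℵ₀ ≤ κ := hk0.trans hkκ
  have h2κ : ℵ₀ ≤ 2 ^ κ := hκ.trans (cantor κ).le
  have hsucc2 : Order.succ κ ≤ 2 ^ κ := Order.succ_le_of_lt (cantor κ)
  choose 𝒱 h𝒱card h𝒱mem h𝒱cof using hkfam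
  have h𝒱κ : ∀ x, #(𝒱 x) ≤ κ := fun x => (h𝒱card x).trans hkκ
  have hιcard : #(κ.ord.ToType) = κ := by rw [Cardinal.mk_toType, Cardinal.card_ord]
  have hϑcard : #(((Order.succ κ).ord).ToType) = Order.succ κ := by
    rw [Cardinal.mk_toType, Cardinal.card_ord]
  set H : Set X := ⋃ t, Stmt8Aux.gseq (κ.ord.ToType) 𝒱 (((Order.succ κ).ord).ToType) t
    with hHdef
  have hϑ2 : #(((Order.succ κ).ord).ToType) ≤ 2 ^ κ := by rw [hϑcard]; exact hsucc2
  have hHcard : #H ≤ 2 ^ κ := by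
    rw [hHdef]
    refine le_trans (mk_iUnion_le _) ?_
    have b2 : ⨆ t, #(Stmt8Aux.gseq (κ.ord.ToType) 𝒱 (((Order.succ κ).ord).ToType) t) ≤
        2 ^ κ := ciSup_le' fun t => Stmt8Aux.mk_gseq_le hκ hιcard.le h𝒱κ _ hϑ2 t
    exact le_trans (mul_le_mul' hϑ2 b2) (le_of_eq (Cardinal.mul_eq_self h2κ))
  have hHuniv : H = Set.univ := by
    by_contra hH
    obtain ⟨z, hz⟩ := (Set.ne_univ_iff_exists_notMem H).1 hH
    have hsep : ∀ y : X, ∃ U' W' : Set X, IsOpen U' ∧ IsOpen W' ∧ (y ≠ z → y ∈ U') ∧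
        z ∈ W' ∧ closure U' ∩ closure W' = ∅ := by
      intro y
      by_cases hy : y = z
      · exact ⟨∅, Set.univ, isOpen_empty, isOpen_univ, fun h' => absurd hy h', Set.mem_univ _, by simp⟩
      · obtain ⟨U', W', hU, hW, hyU, hzW, hd⟩ := h y z hy
        exact ⟨U', W', hU, hW, fun _ => hyU, hzW, hd⟩
    choose U W hUo hWo hyU hzW hd using hsep
    have hVzex : ∀ y : X, ∃ v ∈ 𝒱 z, v ⊆ closure (W y) :=
      fun y => h𝒱cof z (W y) ((hWo y).mem_nhds (hzW y))
    choose Vz hVzmem hVzsub using hVzex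
    obtain ⟨e, he⟩ : ∃ e : κ.ord.ToType → Set X, range e = 𝒱 z := by
      refine Stmt8Aux.exists_range_eq ⟨Vz z, hVzmem z⟩ ?_
      rw [hιcard]; exact h𝒱κ z
    have hzorn : ∀ i : κ.ord.ToType, ∃ D : Set (Set X),
        (D ⊆ {v : Set X | (∃ y ∈ H, v ∈ 𝒱 y) ∧
            ∃ y', y' ∈ H ∧ Vz y' = e i ∧ v ⊆ closure (U y')} ∧
          ∀ a ∈ D, ∀ b ∈ D, a ≠ b → a ∩ b = ∅) ∧
        ∀ E : Set (Set X), (E ⊆ {v : Set X | (∃ y ∈ H, v ∈ 𝒱 y) ∧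
            ∃ y', y' ∈ H ∧ Vz y' = e i ∧ v ⊆ closure (U y')} ∧
          ∀ a ∈ E, ∀ b ∈ E, a ≠ b → a ∩ b = ∅) → D ⊆ E → E ⊆ D := by
      intro i
      have hub : ∀ c ⊆ {D : Set (Set X) | D ⊆ {v : Set X | (∃ y ∈ H, v ∈ 𝒱 y) ∧
          ∃ y', y' ∈ H ∧ Vz y' = e i ∧ v ⊆ closure (U y')} ∧
          ∀ a ∈ D, ∀ b ∈ D, a ≠ b → a ∩ b = ∅},
          IsChain (· ⊆ ·) c → ∃ ub ∈ {D : Set (Set X) | D ⊆ {v : Set X | (∃ y ∈ H, v ∈ 𝒱 y) ∧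
          ∃ y', y' ∈ H ∧ Vz y' = e i ∧ v ⊆ closure (U y')} ∧
          ∀ a ∈ D, ∀ b ∈ D, a ≠ b → a ∩ b = ∅}, ∀ s ∈ c, s ⊆ ub := by
        intro c hcS hchain
        refine ⟨⋃₀ c, ⟨?_, ?_⟩, fun s hs => subset_sUnion_of_mem hs⟩
        · exact sUnion_subset fun s hs => (hcS hs).1
        · rintro a ⟨s1, hs1, ha⟩ b ⟨s2, hs2, hb⟩ hab
          rcases eq_or_ne s1 s2 with rfl | hne
          · exact (hcS hs1).2 a ha b hb hab
          rcases hchain hs1 hs2 hne with h12 | h21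
          · exact (hcS hs2).2 a (h12 ha) b hb hab
          · exact (hcS hs1).2 a ha b (h21 hb) hab
      obtain ⟨m, hm⟩ := zorn_subset _ hub
      exact ⟨m, hm.1, fun E hE hmE => hm.2 hE hmE⟩
    choose D hD1 hDmax using hzorn
    have hDsub := fun i => (hD1 i).1
    have hDdisj := fun i => (hD1 i).2
    have hDcard : ∀ i, #(D i) ≤ κ := by
      intro i
      refine le_trans (Stmt8Aux.card_le_cellEven ?_ (hDdisj i)) hcκ
      intro a ha
      obtain ⟨⟨y, hyH, hyV⟩, -⟩ := hDsub i ha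
      obtain ⟨hcl, hnhds⟩ := h𝒱mem y a hyV
      exact ⟨hcl, ⟨y, mem_interior_iff_mem_nhds.2 hnhds⟩⟩
    have hPex : ∀ i, ∃ f : κ.ord.ToType → Set X, range f = insert ∅ (D i) := by
      intro i
      refine Stmt8Aux.exists_range_eq ⟨∅, mem_insert _ _⟩ ?_
      rw [hιcard]
      refine le_trans mk_insert_le (Cardinal.add_le_of_le hκ (hDcard i) ?_)
      exact le_trans Cardinal.one_le_aleph0 hκ
    choose P hP using hPex
    have hPmem : ∀ i j, P i j ∈ insert ∅ (D i) := fun i j => (hP i) ▸ mem_range_self j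
    have hPgood : Stmt8Aux.goodP 𝒱 H P := by
      intro i j
      rcases mem_insert_iff.1 (hPmem i j) with h0 | hmem
      · exact Or.inl h0
      · obtain ⟨⟨y, hyH, hyV⟩, -⟩ := hDsub i hmem
        exact Or.inr ⟨y, hyH, hyV⟩
    have hzesc : z ∈ Stmt8Aux.escp P := by
      simp only [Stmt8Aux.escp, Stmt8Aux.trap, mem_compl_iff, mem_iUnion, not_exists]
      intro i hi
      have heiV : e i ∈ 𝒱 z := he ▸ mem_range_self i
      obtain ⟨hecl, henhds⟩ := h𝒱mem z (e i) heiV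
      have hzO : z ∈ interior (e i) := mem_interior_iff_mem_nhds.2 henhds
      obtain ⟨j, p, hp1, hp2⟩ := hi (interior (e i)) isOpen_interior hzO
      rcases mem_insert_iff.1 (hPmem i j) with h0 | hmem
      · rw [h0] at hp2; exact hp2
      · obtain ⟨-, y', hy'H, hVzy', hsubU⟩ := hDsub i hmem
        have hpU : p ∈ closure (U y') := hsubU hp2
        have hpW : p ∈ closure (W y') := by
          have h1 : closure (interior (e i)) ⊆ e i := closure_minimal interior_subset hecl
          have h2 : e i ⊆ closure (W y') := hVzy' ▸ hVzsub y'
          exact h2 (h1 hp1)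
        have hpd : p ∈ closure (U y') ∩ closure (W y') := ⟨hpU, hpW⟩
        rw [hd y'] at hpd
        exact hpd
    have hnE : (Stmt8Aux.escp P).Nonempty := ⟨z, hzesc⟩
    have hpickH : Stmt8Aux.pick P ∈ H := by
      rw [hHdef]
      exact Stmt8Aux.gseq_closed hκ hιcard.le 𝒱 (hHdef ▸ hPgood) hnE
    have hpickesc : Stmt8Aux.pick P ∈ Stmt8Aux.escp P := Stmt8Aux.pick_mem hnE
    set p := Stmt8Aux.pick P with hpdef
    have hpz : p ≠ z := fun hpz' => hz (hpz' ▸ hpickH)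
    obtain ⟨i₀, hi₀⟩ : ∃ i₀, e i₀ = Vz p := by
      have : Vz p ∈ range e := he.symm ▸ hVzmem p
      exact this
    have htrap : p ∈ Stmt8Aux.trap P i₀ := by
      intro O hO hpO
      have hN : O ∩ U p ∈ nhds p := (hO.inter (hUo p)).mem_nhds ⟨hpO, hyU p hpz⟩
      obtain ⟨v, hv𝒱, hvsub⟩ := h𝒱cof p _ hN
      have hvC : v ∈ {v : Set X | (∃ y ∈ H, v ∈ 𝒱 y) ∧
          ∃ y', y' ∈ H ∧ Vz y' = e i₀ ∧ v ⊆ closure (U y')} :=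
        ⟨⟨p, hpickH, hv𝒱⟩, p, hpickH, hi₀.symm,
          hvsub.trans (closure_mono inter_subset_right)⟩
      have hpv : p ∈ v := mem_of_mem_nhds (h𝒱mem p v hv𝒱).2
      by_cases hcase : ∃ w ∈ D i₀, (v ∩ w).Nonempty
      · obtain ⟨w, hwD, x, hx1, hx2⟩ := hcase
        obtain ⟨j, hj⟩ : ∃ j, P i₀ j = w := by
          have : w ∈ range (P i₀) := (hP i₀).symm ▸ mem_insert_of_mem _ hwD
          exact this
        refine ⟨j, x, ?_, hj ▸ hx2⟩
        exact closure_mono inter_subset_left (hvsub hx1)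
      · rw [not_exists] at hcase
        have hcase' : ∀ w ∈ D i₀, v ∩ w = ∅ := fun w hw =>
          not_nonempty_iff_eq_empty.1 (fun hn => hcase w ⟨hw, hn⟩)
        have hins : insert v (D i₀) ⊆ D i₀ := by
          refine hDmax i₀ _ ⟨insert_subset_iff.2 ⟨hvC, hDsub i₀⟩, ?_⟩ (subset_insert _ _)
          intro a ha b hb hab
          rcases mem_insert_iff.1 ha with rfl | haD
          · rcases mem_insert_iff.1 hb with rfl | hbD
            · exact absurd rfl hab
            · exact hcase' b hbD
          · rcases mem_insert_iff.1 hb with rfl | hbD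
            · rw [inter_comm]; exact hcase' a haD
            · exact hDdisj i₀ a haD b hbD hab
        have hvD : v ∈ D i₀ := hins (mem_insert _ _)
        have hvv : v ∩ v = ∅ := hcase' v hvD
        rw [inter_self] at hvv
        rw [hvv] at hpv
        exact absurd hpv (notMem_empty p)
    exact hpickesc (mem_iUnion.2 ⟨i₀, htrap⟩)
  rw [hHuniv, Cardinal.mk_univ] at hHcard
  exact hHcard
end
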